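/- arXiv:1004.3342 — 3 statements merged into one kernel-verified Lean document; each statement's English description precedes it below -/
import Mathlib

section
/- If a and b are nonstandard elements of M and a E³ b, then there is an order automorphism f : M ≃o M with f a = b (that is, a E⁵ b). -/
/-- `a` is a nonstandard element: above every natural number cast. -/
def Nonstd {M : Type*} [CommSemiring M] [LinearOrder M] [IsStrictOrderedRing M] (a : M) : Prop :=
  ∀ n : ℕ, (n : M) < a

def E0 {M : Type*} [CommSemiring M] [LinearOrder M] [IsStrictOrderedRing M] (a b : M) : Prop :=
  ∃ n : ℕ, a < b + (n : M) ∧ b < a + (n : M)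

def E1 {M : Type*} [CommSemiring M] [LinearOrder M] [IsStrictOrderedRing M] (a b : M) : Prop :=
  ∃ c : M, (∀ n : ℕ, (n : M) * c < a ∧ (n : M) * c < b) ∧ a < b + c ∧ b < a + c

def E2 {M : Type*} [CommSemiring M] [LinearOrder M] [IsStrictOrderedRing M] (a b : M) : Prop :=
  ∃ n : ℕ, a < (n : M) * b ∧ b < (n : M) * a

def E3 {M : Type*} [CommSemiring M] [LinearOrder M] [IsStrictOrderedRing M] (a b : M) : Prop :=
  ∃ c : M, (∀ n : ℕ, c ^ n < a ∧ c ^ n < b) ∧ a < b * c ∧ b < a * c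

def E4 {M : Type*} [CommSemiring M] [LinearOrder M] [IsStrictOrderedRing M] (a b : M) : Prop :=
  ∃ n : ℕ, a < b ^ n ∧ b < a ^ n

/-- `a E⁵ b`: some order automorphism of `M` maps `a` to `b`. -/
def E5 {M : Type*} [CommSemiring M] [LinearOrder M] [IsStrictOrderedRing M] (a b : M) : Prop :=
  ∃ f : M ≃o M, f a = b

/-- `E` is a convex equivalence relation on the nonstandard elements of `M`. -/
def IsConvexEquiv {M : Type*} [CommSemiring M] [LinearOrder M] [IsStrictOrderedRing M] (E : M → M → Prop) : Prop :=
  (∀ a : M, Nonstd a → E a a) ∧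
  (∀ a b : M, Nonstd a → Nonstd b → E a b → E b a) ∧
  (∀ a b c : M, Nonstd a → Nonstd b → Nonstd c → E a b → E b c → E a c) ∧
  (∀ a b c : M, Nonstd a → Nonstd b → Nonstd c → a ≤ b → b ≤ c → E a c → E a b)

/-- An almost `{<,+}`-isomorphism: an order isomorphism whose additivity error is finite. -/
def IsAlmostAddIso {M₁ M₂ : Type*} [CommSemiring M₁] [LinearOrder M₁] [IsStrictOrderedRing M₁]
    [CommSemiring M₂] [LinearOrder M₂] [IsStrictOrderedRing M₂] (f : M₁ ≃o M₂) : Prop :=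
  ∀ a b : M₁, ∃ n : ℕ, f (a + b) < f a + f b + (n : M₂) ∧ f a + f b < f (a + b) + (n : M₂)

/-- `M` is 2-order-rigid. -/
def OrderRigid2 (M : Type*) [CommSemiring M] [LinearOrder M] [IsStrictOrderedRing M] : Prop :=
  ∀ a b : M, Nonstd a → Nonstd b →
    Nonempty ({x : M // x < a} ≃o {x : M // x < b}) → E2 a b

/-- `M` is 3-order-rigid. -/
def OrderRigid3 (M : Type*) [CommSemiring M] [LinearOrder M] [IsStrictOrderedRing M] : Prop :=
  ∀ a b : M, Nonstd a → Nonstd b →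
    Nonempty ({x : M // x < a} ≃o {x : M // x < b}) → E3 a b

/-- `M` is 4-order-rigid. -/
def OrderRigid4 (M : Type*) [CommSemiring M] [LinearOrder M] [IsStrictOrderedRing M] : Prop :=
  ∀ a b : M, Nonstd a → Nonstd b →
    Nonempty ({x : M // x < a} ≃o {x : M // x < b}) → E4 a b


namespace E3E5aux

structure Ctx (M : Type*) [CommSemiring M] [LinearOrder M] [IsStrictOrderedRing M] : Type _ where
  h0 : ∀ x : M, 0 ≤ x
  hsub : ∀ x y : M, x ≤ y → ∃ d, y = x + d
  hdiv : ∀ x y : M, y ≠ 0 → ∃ q r : M, x = y * q + r ∧ r < y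
  a : M
  b : M
  c : M
  ha : Nonstd a
  hb : Nonstd b
  hc2 : (2 : M) ≤ c
  hpow : ∀ n : ℕ, c ^ n < a ∧ c ^ n < b
  hab : a < b * c
  hba : b < a * c

variable {M : Type*} [CommSemiring M] [LinearOrder M] [IsStrictOrderedRing M] (C : Ctx M)

lemma a_pos : (0 : M) < C.a := by
  have := C.ha 0; simpa using this

lemma b_pos : (0 : M) < C.b := by
  have := C.hb 0; simpa using this

lemma a_ne : C.a ≠ 0 := ne_of_gt (a_pos C)
lemma b_ne : C.b ≠ 0 := ne_of_gt (b_pos C)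

lemma c_pos : (0 : M) < C.c := lt_of_lt_of_le two_pos C.hc2
lemma c_one : (1 : M) < C.c := lt_of_lt_of_le one_lt_two C.hc2

lemma cpow_pos (n : ℕ) : (0 : M) < C.c ^ n := pow_pos (c_pos C) n

lemma one_le_cpow (n : ℕ) : (1 : M) ≤ C.c ^ n := by
  induction n with
  | zero => simp
  | succ n ih =>
    rw [pow_succ]
    calc (1 : M) ≤ C.c ^ n := ih
    _ = C.c ^ n * 1 := (mul_one _).symm
    _ ≤ C.c ^ n * C.c := mul_le_mul_of_nonneg_left (le_of_lt (c_one C)) (C.h0 _)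

lemma cpow_le_cpow {n m : ℕ} (h : n ≤ m) : (C.c : M) ^ n ≤ C.c ^ m := by
  obtain ⟨k, rfl⟩ := Nat.exists_eq_add_of_le h
  rw [pow_add]
  calc C.c ^ n = C.c ^ n * 1 := (mul_one _).symm
  _ ≤ C.c ^ n * C.c ^ k := mul_le_mul_of_nonneg_left (one_le_cpow C k) (C.h0 _)

lemma two_cpow (n : ℕ) : C.c ^ n + C.c ^ n ≤ C.c ^ (n + 1) := by
  rw [pow_succ, ← mul_two]
  exact mul_le_mul_of_nonneg_left C.hc2 (C.h0 _)

lemma cpow_lt_succ (n : ℕ) : C.c ^ n < C.c ^ (n + 1) := by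
  rw [pow_succ]
  calc C.c ^ n = C.c ^ n * 1 := (mul_one _).symm
  _ < C.c ^ n * C.c := mul_lt_mul_of_pos_left (c_one C) (cpow_pos C n)

/-- The cut of `c`-power–bounded elements. -/
def inJ (x : M) : Prop := ∃ n : ℕ, x < C.c ^ n

lemma Jdown {x y : M} (h : y ≤ x) (hx : inJ C x) : inJ C y := by
  obtain ⟨n, hn⟩ := hx; exact ⟨n, lt_of_le_of_lt h hn⟩

lemma J0 : inJ C 0 := ⟨0, by simpa using zero_lt_one⟩

lemma J1 : inJ C 1 := ⟨1, by simpa using c_one C⟩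

lemma Jcpow (k : ℕ) : inJ C (C.c ^ k) := ⟨k + 1, cpow_lt_succ C k⟩

lemma Jadd {x y : M} (hx : inJ C x) (hy : inJ C y) : inJ C (x + y) := by
  obtain ⟨n, hn⟩ := hx; obtain ⟨m, hm⟩ := hy
  refine ⟨max n m + 1, ?_⟩
  calc x + y < C.c ^ n + C.c ^ m := add_lt_add hn hm
  _ ≤ C.c ^ (max n m) + C.c ^ (max n m) :=
      add_le_add (cpow_le_cpow C (le_max_left _ _)) (cpow_le_cpow C (le_max_right _ _))
  _ ≤ C.c ^ (max n m + 1) := two_cpow C _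

lemma Jmulc {x : M} (hx : inJ C x) : inJ C (x * C.c) := by
  obtain ⟨n, hn⟩ := hx
  exact ⟨n + 1, by rw [pow_succ]; exact mul_lt_mul_of_pos_right hn (c_pos C)⟩

lemma notJa : ¬ inJ C C.a := by
  rintro ⟨n, hn⟩; exact absurd (lt_trans (C.hpow n).1 hn) (lt_irrefl _)

lemma notJb : ¬ inJ C C.b := by
  rintro ⟨n, hn⟩; exact absurd (lt_trans (C.hpow n).2 hn) (lt_irrefl _)

lemma J_lt {j x : M} (hj : inJ C j) (hx : ¬ inJ C x) : j < x := by
  by_contra h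
  exact hx (Jdown C (le_of_not_gt h) hj)

/-- Distance-in-`J` equivalence. -/
def sim (x y : M) : Prop := ∃ j, inJ C j ∧ x ≤ y + j ∧ y ≤ x + j

lemma sim_refl (x : M) : sim C x x :=
  ⟨0, J0 C, by simp, by simp⟩

lemma sim_symm {x y : M} (h : sim C x y) : sim C y x := by
  obtain ⟨j, hj, h1, h2⟩ := h; exact ⟨j, hj, h2, h1⟩

lemma sim_trans {x y z : M} (h : sim C x y) (h' : sim C y z) : sim C x z := by
  obtain ⟨j, hj, h1, h2⟩ := h; obtain ⟨j', hj', h1', h2'⟩ := h'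
  refine ⟨j + j', Jadd C hj hj', ?_, ?_⟩
  · calc x ≤ y + j := h1
    _ ≤ (z + j') + j := add_le_add_left h1' j
    _ = z + (j + j') := by ring
  · calc z ≤ y + j' := h2'
    _ ≤ (x + j) + j' := add_le_add_left h2 j'
    _ = x + (j + j') := by ring

lemma simJ {x y : M} (h : sim C x y) (hx : inJ C x) : inJ C y := by
  obtain ⟨j, hj, _, h2⟩ := h
  exact Jdown C h2 (Jadd C hx hj)

lemma sim_zero_iff {x : M} : sim C x 0 ↔ inJ C x := by
  constructor
  · intro h; exact simJ C (sim_symm C h) (J0 C)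
  · intro hx; exact ⟨x, hx, by simpa using le_add_of_nonneg_right (C.h0 x), by simp [C.h0 x]⟩

/-- Separation: inequivalent points have all their equivalents strictly ordered. -/
lemma sim_sep {x y x' y' : M} (hxy : x < y) (hns : ¬ sim C x y)
    (hx : sim C x x') (hy : sim C y y') : x' < y' := by
  by_contra h
  have hyx' : y' ≤ x' := le_of_not_gt h
  obtain ⟨j, hj, hx1, hx2⟩ := hx
  obtain ⟨j', hj', hy1, hy2⟩ := hy
  apply hns
  refine ⟨j + j', Jadd C hj hj', ?_, ?_⟩
  · calc x ≤ y := le_of_lt hxy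
    _ ≤ y + (j + j') := le_add_of_nonneg_right (C.h0 _)
  · calc y ≤ y' + j' := hy1
    _ ≤ x' + j' := add_le_add_left hyx' j'
    _ ≤ (x + j) + j' := add_le_add_left hx2 j'
    _ = x + (j + j') := by ring

end E3E5aux

namespace E3E5aux

variable {M : Type*} [CommSemiring M] [LinearOrder M] [IsStrictOrderedRing M] (C : Ctx M)

/-- The multiplicative `c`-galaxy of `a`. -/
def inGam (x : M) : Prop := ∃ n : ℕ, x < C.a * C.c ^ n ∧ C.a < x * C.c ^ n

lemma Gam_a : inGam C C.a := by
  refine ⟨1, ?_, ?_⟩ <;>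
  · calc C.a = C.a * 1 := (mul_one _).symm
    _ < C.a * C.c ^ 1 := by
        rw [pow_one]; exact mul_lt_mul_of_pos_left (c_one C) (a_pos C)

lemma Gam_b : inGam C C.b := by
  refine ⟨1, ?_, ?_⟩
  · rw [pow_one]; exact C.hba
  · rw [pow_one]; exact C.hab

lemma Gam_notJ {x : M} (hx : inGam C x) : ¬ inJ C x := by
  rintro ⟨k, hk⟩
  obtain ⟨n, _, h2⟩ := hx
  have : C.a < C.c ^ k * C.c ^ n :=
    lt_of_lt_of_le h2 (mul_le_mul_of_nonneg_right (le_of_lt hk) (C.h0 _))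
  rw [← pow_add] at this
  exact absurd (lt_trans (C.hpow (k + n)).1 this) (lt_irrefl _)

lemma Gam_convex {x y z : M} (hx : inGam C x) (hy : inGam C y)
    (h1 : x ≤ z) (h2 : z ≤ y) : inGam C z := by
  obtain ⟨n, hn, _⟩ := hy
  obtain ⟨m, _, hm⟩ := hx
  refine ⟨max n m, ?_, ?_⟩
  · calc z ≤ y := h2
    _ < C.a * C.c ^ n := hn
    _ ≤ C.a * C.c ^ (max n m) :=
        mul_le_mul_of_nonneg_left (cpow_le_cpow C (le_max_left _ _)) (C.h0 _)
  · calc C.a < x * C.c ^ m := hm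
    _ ≤ z * C.c ^ m := mul_le_mul_of_nonneg_right h1 (C.h0 _)
    _ ≤ z * C.c ^ (max n m) :=
        mul_le_mul_of_nonneg_left (cpow_le_cpow C (le_max_right _ _)) (C.h0 _)

lemma Gam_sim {x y : M} (h : sim C x y) (hx : inGam C x) : inGam C y := by
  obtain ⟨j, hj, h1, h2⟩ := h
  have hxG := hx
  obtain ⟨n, hn1, hn2⟩ := hx
  have hyJ : ¬ inJ C y := by
    intro hy
    exact Gam_notJ C hxG (Jdown C h1 (Jadd C hy hj))
  refine ⟨n + 1, ?_, ?_⟩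
  · -- y ≤ x + j < a*c^n + a ≤ a*(c^n+1) ≤ a*c^(n+1)
    have hja : j < C.a := J_lt C hj (notJa C)
    calc y ≤ x + j := h2
    _ < C.a * C.c ^ n + C.a := add_lt_add hn1 hja
    _ = C.a * (C.c ^ n + 1) := by ring
    _ ≤ C.a * (C.c ^ n + C.c ^ n) :=
        mul_le_mul_of_nonneg_left (add_le_add_right (one_le_cpow C n) _) (C.h0 _)
    _ ≤ C.a * C.c ^ (n + 1) := mul_le_mul_of_nonneg_left (two_cpow C n) (C.h0 _)
  · -- a < x*c^n ≤ (y+j)*c^n = y*c^n + j*c^n ; j < y since y ∉ J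
    have hjy : j < y := J_lt C hj hyJ
    have : C.a < y * C.c ^ n + j * C.c ^ n := by
      calc C.a < x * C.c ^ n := hn2
      _ ≤ (y + j) * C.c ^ n := mul_le_mul_of_nonneg_right h1 (C.h0 _)
      _ = y * C.c ^ n + j * C.c ^ n := by ring
    have h2' : C.a < y * C.c ^ n + y * C.c ^ n :=
      lt_of_lt_of_le this
        (add_le_add_right (mul_le_mul_of_nonneg_right (le_of_lt hjy) (C.h0 _)) _)
    calc C.a < y * C.c ^ n + y * C.c ^ n := h2'
    _ = y * (C.c ^ n + C.c ^ n) := by ring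
    _ ≤ y * C.c ^ (n + 1) := mul_le_mul_of_nonneg_left (two_cpow C n) (C.h0 _)

lemma Gam_not0 : ¬ inGam C (0 : M) :=
  fun h => Gam_notJ C h (J0 C)

/-- Quotient of `x * b` upon division by `a`. -/
noncomputable def qdivA (x : M) : M := (C.hdiv (x * C.b) C.a (a_ne C)).choose

lemma qdivA_spec (x : M) :
    ∃ r : M, x * C.b = C.a * qdivA C x + r ∧ r < C.a :=
  (C.hdiv (x * C.b) C.a (a_ne C)).choose_spec

/-- Quotient of `y * a` upon division by `b`. -/
noncomputable def qdivB (y : M) : M := (C.hdiv (y * C.a) C.b (b_ne C)).choose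

lemma qdivB_spec (y : M) :
    ∃ r : M, y * C.a = C.b * qdivB C y + r ∧ r < C.b :=
  (C.hdiv (y * C.a) C.b (b_ne C)).choose_spec

open Classical in
noncomputable def phi (x : M) : M := if inGam C x then qdivA C x else x

open Classical in
noncomputable def phi' (y : M) : M := if inGam C y then qdivB C y else y

lemma phi_of_Gam {x : M} (h : inGam C x) : phi C x = qdivA C x := if_pos h
lemma phi_of_not {x : M} (h : ¬ inGam C x) : phi C x = x := if_neg h
lemma phi'_of_Gam {y : M} (h : inGam C y) : phi' C y = qdivB C y := if_pos h
lemma phi'_of_not {y : M} (h : ¬ inGam C y) : phi' C y = y := if_neg h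

end E3E5aux

namespace E3E5aux

variable {M : Type*} [CommSemiring M] [LinearOrder M] [IsStrictOrderedRing M] (C : Ctx M)

lemma qdivA_Gam {x : M} (hx : inGam C x) : inGam C (qdivA C x) := by
  obtain ⟨n, hxu, hxl⟩ := hx
  obtain ⟨r, hqr, hr⟩ := qdivA_spec C x
  set q := qdivA C x with hq
  have hup : q < C.a * C.c ^ (n + 1) := by
    have h1 : C.a * q ≤ x * C.b := by rw [hqr]; exact le_add_of_nonneg_right (C.h0 r)
    have h2 : x * C.b < C.a * (C.c ^ n * C.b) := by
      calc x * C.b < (C.a * C.c ^ n) * C.b := mul_lt_mul_of_pos_right hxu (b_pos C)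
      _ = C.a * (C.c ^ n * C.b) := by ring
    have h3 : C.c ^ n * C.b < C.a * C.c ^ (n + 1) := by
      calc C.c ^ n * C.b < C.c ^ n * (C.a * C.c) := mul_lt_mul_of_pos_left C.hba (cpow_pos C n)
      _ = C.a * C.c ^ (n + 1) := by ring
    have h5 : C.a * q < C.a * (C.a * C.c ^ (n + 1)) :=
      lt_of_le_of_lt h1 (lt_trans h2 (mul_lt_mul_of_pos_left h3 (a_pos C)))
    exact lt_of_mul_lt_mul_left h5 (C.h0 _)
  have hlow1 : C.a < (q + 1) * C.c ^ (n + 1) := by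
    have h1 : x * C.b < C.a * (q + 1) := by
      rw [hqr]
      calc C.a * q + r < C.a * q + C.a := add_lt_add_right hr _
      _ = C.a * (q + 1) := by ring
    have h2 : C.a * C.a < (x * C.c ^ n) * (C.b * C.c) :=
      mul_lt_mul'' hxl C.hab (C.h0 _) (C.h0 _)
    have h5 : C.a * C.a < C.a * ((q + 1) * C.c ^ (n + 1)) := by
      calc C.a * C.a < (x * C.c ^ n) * (C.b * C.c) := h2
      _ = (x * C.b) * C.c ^ (n + 1) := by ring
      _ < (C.a * (q + 1)) * C.c ^ (n + 1) := mul_lt_mul_of_pos_right h1 (cpow_pos C _)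
      _ = C.a * ((q + 1) * C.c ^ (n + 1)) := by ring
    exact lt_of_mul_lt_mul_left h5 (C.h0 _)
  have hq1 : (1 : M) ≤ q := by
    by_contra hcon
    have hle : q ≤ 1 := le_of_not_ge hcon
    have hq1' : q + 1 ≤ 2 := by
      calc q + 1 ≤ 1 + 1 := add_le_add_left hle 1
      _ = 2 := one_add_one_eq_two
    have hfin : C.a < C.c ^ (n + 2) := by
      calc C.a < (q + 1) * C.c ^ (n + 1) := hlow1
      _ ≤ 2 * C.c ^ (n + 1) := mul_le_mul_of_nonneg_right hq1' (C.h0 _)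
      _ = C.c ^ (n + 1) + C.c ^ (n + 1) := two_mul _
      _ ≤ C.c ^ (n + 2) := two_cpow C _
    exact absurd (lt_trans (C.hpow (n + 2)).1 hfin) (lt_irrefl _)
  have hlow : C.a < q * C.c ^ (n + 2) := by
    calc C.a < (q + 1) * C.c ^ (n + 1) := hlow1
    _ ≤ (q + q) * C.c ^ (n + 1) :=
        mul_le_mul_of_nonneg_right (add_le_add_right hq1 q) (C.h0 _)
    _ = q * (C.c ^ (n + 1) * 2) := by ring
    _ ≤ q * C.c ^ (n + 2) := by
        refine mul_le_mul_of_nonneg_left ?_ (C.h0 q)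
        rw [mul_two]; exact two_cpow C _
  exact ⟨n + 2,
    lt_of_lt_of_le hup (mul_le_mul_of_nonneg_left (cpow_le_cpow C (by omega)) (C.h0 _)), hlow⟩

lemma qdivB_Gam {y : M} (hy : inGam C y) : inGam C (qdivB C y) := by
  obtain ⟨n, hyu, hyl⟩ := hy
  obtain ⟨r, hqr, hr⟩ := qdivB_spec C y
  set q := qdivB C y with hq
  have hup : q < C.a * C.c ^ (n + 1) := by
    have h1 : C.b * q ≤ y * C.a := by rw [hqr]; exact le_add_of_nonneg_right (C.h0 r)
    have h2 : y * C.a < C.a * (C.a * C.c ^ n) := by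
      calc y * C.a < (C.a * C.c ^ n) * C.a := mul_lt_mul_of_pos_right hyu (a_pos C)
      _ = C.a * (C.a * C.c ^ n) := by ring
    have h3 : C.a * (C.a * C.c ^ n) < C.b * (C.a * C.c ^ (n + 1)) := by
      calc C.a * (C.a * C.c ^ n) < (C.b * C.c) * (C.a * C.c ^ n) :=
        mul_lt_mul_of_pos_right C.hab (mul_pos (a_pos C) (cpow_pos C n))
      _ = C.b * (C.a * C.c ^ (n + 1)) := by ring
    have h5 : C.b * q < C.b * (C.a * C.c ^ (n + 1)) :=
      lt_of_le_of_lt h1 (lt_trans h2 h3)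
    exact lt_of_mul_lt_mul_left h5 (C.h0 _)
  have hlow1 : C.a < (q + 1) * C.c ^ (n + 1) := by
    have h1 : y * C.a < C.b * (q + 1) := by
      rw [hqr]
      calc C.b * q + r < C.b * q + C.b := add_lt_add_right hr _
      _ = C.b * (q + 1) := by ring
    have hpos : (0 : M) < (q + 1) * C.c ^ n := by
      have : (0:M) < q + 1 := lt_of_lt_of_le zero_lt_one (le_add_of_nonneg_left (C.h0 q))
      exact mul_pos this (cpow_pos C n)
    have h5 : C.a * C.a < C.a * ((q + 1) * C.c ^ (n + 1)) := by
      calc C.a * C.a < (y * C.c ^ n) * C.a := mul_lt_mul_of_pos_right hyl (a_pos C)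
      _ = (y * C.a) * C.c ^ n := by ring
      _ < (C.b * (q + 1)) * C.c ^ n := mul_lt_mul_of_pos_right h1 (cpow_pos C _)
      _ = C.b * ((q + 1) * C.c ^ n) := by ring
      _ < (C.a * C.c) * ((q + 1) * C.c ^ n) := mul_lt_mul_of_pos_right C.hba hpos
      _ = C.a * ((q + 1) * C.c ^ (n + 1)) := by ring
    exact lt_of_mul_lt_mul_left h5 (C.h0 _)
  have hq1 : (1 : M) ≤ q := by
    by_contra hcon
    have hle : q ≤ 1 := le_of_not_ge hcon
    have hq1' : q + 1 ≤ 2 := by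
      calc q + 1 ≤ 1 + 1 := add_le_add_left hle 1
      _ = 2 := one_add_one_eq_two
    have hfin : C.a < C.c ^ (n + 2) := by
      calc C.a < (q + 1) * C.c ^ (n + 1) := hlow1
      _ ≤ 2 * C.c ^ (n + 1) := mul_le_mul_of_nonneg_right hq1' (C.h0 _)
      _ = C.c ^ (n + 1) + C.c ^ (n + 1) := two_mul _
      _ ≤ C.c ^ (n + 2) := two_cpow C _
    exact absurd (lt_trans (C.hpow (n + 2)).1 hfin) (lt_irrefl _)
  have hlow : C.a < q * C.c ^ (n + 2) := by
    calc C.a < (q + 1) * C.c ^ (n + 1) := hlow1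
    _ ≤ (q + q) * C.c ^ (n + 1) :=
        mul_le_mul_of_nonneg_right (add_le_add_right hq1 q) (C.h0 _)
    _ = q * (C.c ^ (n + 1) * 2) := by ring
    _ ≤ q * C.c ^ (n + 2) := by
        refine mul_le_mul_of_nonneg_left ?_ (C.h0 q)
        rw [mul_two]; exact two_cpow C _
  exact ⟨n + 2,
    lt_of_lt_of_le hup (mul_le_mul_of_nonneg_left (cpow_le_cpow C (by omega)) (C.h0 _)), hlow⟩

/-- One-sided bound for descent of `qdivA` to the quotient. -/
lemma qdivA_bound {x y j : M} {k : ℕ} (hyx : y ≤ x + j) (hj : j < C.c ^ k) :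
    qdivA C y ≤ qdivA C x + C.c ^ (k + 2) := by
  obtain ⟨rx, hxs, hrx⟩ := qdivA_spec C x
  obtain ⟨ry, hys, hry⟩ := qdivA_spec C y
  have h1 : C.a * qdivA C y ≤ y * C.b := by
    rw [hys]; exact le_add_of_nonneg_right (C.h0 ry)
  have h2 : y * C.b ≤ x * C.b + j * C.b := by
    calc y * C.b ≤ (x + j) * C.b := mul_le_mul_of_nonneg_right hyx (C.h0 _)
    _ = x * C.b + j * C.b := by ring
  have h3 : j * C.b < C.a * C.c ^ (k + 1) := by
    calc j * C.b < C.c ^ k * (C.a * C.c) := mul_lt_mul'' hj C.hba (C.h0 j) (C.h0 _)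
    _ = C.a * C.c ^ (k + 1) := by ring
  have h4 : x * C.b < C.a * qdivA C x + C.a := by
    rw [hxs]; exact add_lt_add_right hrx _
  have h5 : C.a * qdivA C y < C.a * (qdivA C x + (1 + C.c ^ (k + 1))) := by
    calc C.a * qdivA C y ≤ x * C.b + j * C.b := le_trans h1 h2
    _ < (C.a * qdivA C x + C.a) + C.a * C.c ^ (k + 1) := add_lt_add h4 h3
    _ = C.a * (qdivA C x + (1 + C.c ^ (k + 1))) := by ring
  have h6 : qdivA C y < qdivA C x + (1 + C.c ^ (k + 1)) :=
    lt_of_mul_lt_mul_left h5 (C.h0 _)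
  have h7 : (1 : M) + C.c ^ (k + 1) ≤ C.c ^ (k + 2) := by
    calc (1 : M) + C.c ^ (k + 1) ≤ C.c ^ (k + 1) + C.c ^ (k + 1) :=
      add_le_add_left (one_le_cpow C _) _
    _ ≤ C.c ^ (k + 2) := two_cpow C _
  exact le_of_lt (lt_of_lt_of_le h6 (add_le_add_right h7 _))

/-- One-sided bound for injectivity of `qdivA` on the quotient. -/
lemma qdivA_inv_bound {x y j : M} {k : ℕ}
    (h : qdivA C x ≤ qdivA C y + j) (hj : j < C.c ^ k) :
    x ≤ y + C.c ^ (k + 2) := by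
  obtain ⟨rx, hxs, hrx⟩ := qdivA_spec C x
  obtain ⟨ry, hys, hry⟩ := qdivA_spec C y
  have h1 : x * C.b < C.a * qdivA C x + C.a := by
    rw [hxs]; exact add_lt_add_right hrx _
  have h2 : C.a * qdivA C x ≤ C.a * qdivA C y + C.a * j := by
    calc C.a * qdivA C x ≤ C.a * (qdivA C y + j) := mul_le_mul_of_nonneg_left h (C.h0 _)
    _ = C.a * qdivA C y + C.a * j := by ring
  have h3 : C.a * qdivA C y ≤ y * C.b := by
    rw [hys]; exact le_add_of_nonneg_right (C.h0 ry)
  have hj1 : (0 : M) < j + 1 := lt_of_lt_of_le zero_lt_one (le_add_of_nonneg_left (C.h0 j))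
  have h4 : C.a * j + C.a < C.b * (C.c * (j + 1)) := by
    calc C.a * j + C.a = C.a * (j + 1) := by ring
    _ < (C.b * C.c) * (j + 1) := mul_lt_mul_of_pos_right C.hab hj1
    _ = C.b * (C.c * (j + 1)) := by ring
  have h5 : C.c * (j + 1) ≤ C.c ^ (k + 2) := by
    have hj2 : j + 1 ≤ C.c ^ (k + 1) := by
      calc j + 1 ≤ C.c ^ k + 1 := add_le_add_left (le_of_lt hj) 1
      _ ≤ C.c ^ k + C.c ^ k := add_le_add_right (one_le_cpow C k) _
      _ ≤ C.c ^ (k + 1) := two_cpow C _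
    calc C.c * (j + 1) ≤ C.c * C.c ^ (k + 1) := mul_le_mul_of_nonneg_left hj2 (C.h0 _)
    _ = C.c ^ (k + 2) := by ring
  have h6 : C.b * x < C.b * (y + C.c ^ (k + 2)) := by
    calc C.b * x = x * C.b := mul_comm _ _
    _ < C.a * qdivA C x + C.a := h1
    _ ≤ (C.a * qdivA C y + C.a * j) + C.a := add_le_add_left h2 _
    _ ≤ (y * C.b + C.a * j) + C.a := by
        exact add_le_add_left (add_le_add_left h3 _) _
    _ = y * C.b + (C.a * j + C.a) := by ring
    _ < y * C.b + C.b * (C.c * (j + 1)) := add_lt_add_right h4 _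
    _ = C.b * (y + C.c * (j + 1)) := by ring
    _ ≤ C.b * (y + C.c ^ (k + 2)) :=
        mul_le_mul_of_nonneg_left (add_le_add_right h5 _) (C.h0 _)
  exact le_of_lt (lt_of_mul_lt_mul_left h6 (C.h0 _))

/-- One-sided bound for descent of `qdivB` to the quotient. -/
lemma qdivB_bound {x y j : M} {k : ℕ} (hyx : y ≤ x + j) (hj : j < C.c ^ k) :
    qdivB C y ≤ qdivB C x + C.c ^ (k + 2) := by
  obtain ⟨rx, hxs, hrx⟩ := qdivB_spec C x
  obtain ⟨ry, hys, hry⟩ := qdivB_spec C y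
  have h1 : C.b * qdivB C y ≤ y * C.a := by
    rw [hys]; exact le_add_of_nonneg_right (C.h0 ry)
  have h2 : y * C.a ≤ x * C.a + j * C.a := by
    calc y * C.a ≤ (x + j) * C.a := mul_le_mul_of_nonneg_right hyx (C.h0 _)
    _ = x * C.a + j * C.a := by ring
  have h3 : j * C.a < C.b * C.c ^ (k + 1) := by
    calc j * C.a < C.c ^ k * (C.b * C.c) := mul_lt_mul'' hj C.hab (C.h0 j) (C.h0 _)
    _ = C.b * C.c ^ (k + 1) := by ring
  have h4 : x * C.a < C.b * qdivB C x + C.b := by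
    rw [hxs]; exact add_lt_add_right hrx _
  have h5 : C.b * qdivB C y < C.b * (qdivB C x + (1 + C.c ^ (k + 1))) := by
    calc C.b * qdivB C y ≤ x * C.a + j * C.a := le_trans h1 h2
    _ < (C.b * qdivB C x + C.b) + C.b * C.c ^ (k + 1) := add_lt_add h4 h3
    _ = C.b * (qdivB C x + (1 + C.c ^ (k + 1))) := by ring
  have h6 : qdivB C y < qdivB C x + (1 + C.c ^ (k + 1)) :=
    lt_of_mul_lt_mul_left h5 (C.h0 _)
  have h7 : (1 : M) + C.c ^ (k + 1) ≤ C.c ^ (k + 2) := by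
    calc (1 : M) + C.c ^ (k + 1) ≤ C.c ^ (k + 1) + C.c ^ (k + 1) :=
      add_le_add_left (one_le_cpow C _) _
    _ ≤ C.c ^ (k + 2) := two_cpow C _
  exact le_of_lt (lt_of_lt_of_le h6 (add_le_add_right h7 _))

lemma phi_descent {x y : M} (h : sim C x y) : sim C (phi C x) (phi C y) := by
  by_cases hx : inGam C x
  · have hy : inGam C y := Gam_sim C h hx
    rw [phi_of_Gam C hx, phi_of_Gam C hy]
    obtain ⟨j, ⟨k, hjk⟩, h1, h2⟩ := h
    exact ⟨C.c ^ (k + 2), Jcpow C _, qdivA_bound C h1 hjk, qdivA_bound C h2 hjk⟩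
  · have hy : ¬ inGam C y := fun hy => hx (Gam_sim C (sim_symm C h) hy)
    rw [phi_of_not C hx, phi_of_not C hy]
    exact h

lemma phi_inj {x y : M} (h : sim C (phi C x) (phi C y)) : sim C x y := by
  by_cases hx : inGam C x <;> by_cases hy : inGam C y
  · rw [phi_of_Gam C hx, phi_of_Gam C hy] at h
    obtain ⟨j, ⟨k, hjk⟩, h1, h2⟩ := h
    exact ⟨C.c ^ (k + 2), Jcpow C _, qdivA_inv_bound C h1 hjk, qdivA_inv_bound C h2 hjk⟩
  · exfalso
    rw [phi_of_Gam C hx, phi_of_not C hy] at h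
    exact hy (Gam_sim C h (qdivA_Gam C hx))
  · exfalso
    rw [phi_of_not C hx, phi_of_Gam C hy] at h
    exact hx (Gam_sim C (sim_symm C h) (qdivA_Gam C hy))
  · rwa [phi_of_not C hx, phi_of_not C hy] at h

lemma phi_mono {x y : M} (hxy : x < y) (hns : ¬ sim C x y) : phi C x < phi C y := by
  have hnphi : ¬ sim C (phi C x) (phi C y) := fun h => hns (phi_inj C h)
  by_cases hx : inGam C x <;> by_cases hy : inGam C y
  · rw [phi_of_Gam C hx, phi_of_Gam C hy] at hnphi ⊢
    obtain ⟨rx, hxs, hrx⟩ := qdivA_spec C x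
    obtain ⟨ry, hys, hry⟩ := qdivA_spec C y
    have h1 : C.a * qdivA C x < C.a * (qdivA C y + 1) := by
      calc C.a * qdivA C x ≤ x * C.b := by
            rw [hxs]; exact le_add_of_nonneg_right (C.h0 rx)
      _ ≤ y * C.b := mul_le_mul_of_nonneg_right (le_of_lt hxy) (C.h0 _)
      _ < C.a * qdivA C y + C.a := by rw [hys]; exact add_lt_add_right hry _
      _ = C.a * (qdivA C y + 1) := by ring
    have h2 : qdivA C x < qdivA C y + 1 := lt_of_mul_lt_mul_left h1 (C.h0 _)
    by_contra hcon
    have hle : qdivA C y ≤ qdivA C x := le_of_not_gt hcon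
    exact hnphi ⟨1, J1 C, le_of_lt h2, le_trans hle (le_add_of_nonneg_right (C.h0 1))⟩
  · rw [phi_of_Gam C hx, phi_of_not C hy]
    by_contra hcon
    exact hy (Gam_convex C hx (qdivA_Gam C hx) (le_of_lt hxy) (le_of_not_gt hcon))
  · rw [phi_of_not C hx, phi_of_Gam C hy]
    by_contra hcon
    exact hx (Gam_convex C (qdivA_Gam C hy) hy (le_of_not_gt hcon) (le_of_lt hxy))
  · rw [phi_of_not C hx, phi_of_not C hy]; exact hxy

lemma c_sq : (1 : M) + C.c ≤ C.c ^ 2 := by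
  calc (1 : M) + C.c ≤ C.c + C.c := add_le_add_left (le_of_lt (c_one C)) _
  _ = C.c * 2 := (mul_two _).symm
  _ ≤ C.c * C.c := mul_le_mul_of_nonneg_left C.hc2 (C.h0 _)
  _ = C.c ^ 2 := (sq C.c).symm

lemma phi'_phi (x : M) : sim C (phi' C (phi C x)) x := by
  by_cases hx : inGam C x
  · rw [phi_of_Gam C hx, phi'_of_Gam C (qdivA_Gam C hx)]
    obtain ⟨r, hxs, hr⟩ := qdivA_spec C x
    obtain ⟨r', hqs, hr'⟩ := qdivB_spec C (qdivA C x)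
    set q := qdivA C x
    set q' := qdivB C q
    have h1 : q' ≤ x := by
      have : C.b * q' ≤ C.b * x := by
        calc C.b * q' ≤ C.b * q' + r' := le_add_of_nonneg_right (C.h0 r')
        _ = q * C.a := hqs.symm
        _ = C.a * q := mul_comm _ _
        _ ≤ C.a * q + r := le_add_of_nonneg_right (C.h0 r)
        _ = x * C.b := hxs.symm
        _ = C.b * x := mul_comm _ _
      exact le_of_mul_le_mul_left this (b_pos C)
    have h2 : x ≤ q' + C.c ^ 2 := by
      have hbx : C.b * x < C.b * (q' + (1 + C.c)) := by
        calc C.b * x = x * C.b := mul_comm _ _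
        _ = C.a * q + r := hxs
        _ < C.a * q + C.a := add_lt_add_right hr _
        _ = q * C.a + C.a := by ring
        _ = (C.b * q' + r') + C.a := by rw [hqs]
        _ < (C.b * q' + C.b) + C.a := add_lt_add_left (add_lt_add_right hr' _) _
        _ < (C.b * q' + C.b) + C.b * C.c := add_lt_add_right C.hab _
        _ = C.b * (q' + (1 + C.c)) := by ring
      have := lt_of_mul_lt_mul_left hbx (C.h0 _)
      calc x ≤ q' + (1 + C.c) := le_of_lt this
      _ ≤ q' + C.c ^ 2 := add_le_add_right (c_sq C) _
    exact ⟨C.c ^ 2, Jcpow C 2, le_trans h1 (le_add_of_nonneg_right (C.h0 _)), h2⟩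
  · rw [phi_of_not C hx, phi'_of_not C hx]
    exact sim_refl C x

lemma phi_phi' (y : M) : sim C (phi C (phi' C y)) y := by
  by_cases hy : inGam C y
  · rw [phi'_of_Gam C hy, phi_of_Gam C (qdivB_Gam C hy)]
    obtain ⟨r', hys, hr'⟩ := qdivB_spec C y
    obtain ⟨s, hqs, hs⟩ := qdivA_spec C (qdivB C y)
    set q' := qdivB C y
    set q'' := qdivA C q'
    have h1 : q'' ≤ y := by
      have : C.a * q'' ≤ C.a * y := by
        calc C.a * q'' ≤ C.a * q'' + s := le_add_of_nonneg_right (C.h0 s)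
        _ = q' * C.b := hqs.symm
        _ = C.b * q' := mul_comm _ _
        _ ≤ C.b * q' + r' := le_add_of_nonneg_right (C.h0 r')
        _ = y * C.a := hys.symm
        _ = C.a * y := mul_comm _ _
      exact le_of_mul_le_mul_left this (a_pos C)
    have h2 : y ≤ q'' + C.c ^ 2 := by
      have hay : C.a * y < C.a * (q'' + (1 + C.c)) := by
        calc C.a * y = y * C.a := mul_comm _ _
        _ = C.b * q' + r' := hys
        _ < C.b * q' + C.b := add_lt_add_right hr' _
        _ = q' * C.b + C.b := by ring
        _ = (C.a * q'' + s) + C.b := by rw [hqs]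
        _ < (C.a * q'' + C.a) + C.b := add_lt_add_left (add_lt_add_right hs _) _
        _ < (C.a * q'' + C.a) + C.a * C.c := add_lt_add_right C.hba _
        _ = C.a * (q'' + (1 + C.c)) := by ring
      have := lt_of_mul_lt_mul_left hay (C.h0 _)
      calc y ≤ q'' + (1 + C.c) := le_of_lt this
      _ ≤ q'' + C.c ^ 2 := add_le_add_right (c_sq C) _
    exact ⟨C.c ^ 2, Jcpow C 2, le_trans h1 (le_add_of_nonneg_right (C.h0 _)), h2⟩
  · rw [phi'_of_not C hy, phi_of_not C hy]
    exact sim_refl C y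

lemma phi_notJ {x : M} (hx : ¬ inJ C x) : ¬ inJ C (phi C x) := by
  by_cases hG : inGam C x
  · rw [phi_of_Gam C hG]; exact Gam_notJ C (qdivA_Gam C hG)
  · rwa [phi_of_not C hG]

lemma phi'_notJ {y : M} (hy : ¬ inJ C y) : ¬ inJ C (phi' C y) := by
  by_cases hG : inGam C y
  · rw [phi'_of_Gam C hG]; exact Gam_notJ C (qdivB_Gam C hG)
  · rwa [phi'_of_not C hG]

lemma phi'_descent {x y : M} (h : sim C x y) : sim C (phi' C x) (phi' C y) := by
  by_cases hx : inGam C x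
  · have hy : inGam C y := Gam_sim C h hx
    rw [phi'_of_Gam C hx, phi'_of_Gam C hy]
    obtain ⟨j, ⟨k, hjk⟩, h1, h2⟩ := h
    exact ⟨C.c ^ (k + 2), Jcpow C _, qdivB_bound C h1 hjk, qdivB_bound C h2 hjk⟩
  · have hy : ¬ inGam C y := fun hy => hx (Gam_sim C (sim_symm C h) hy)
    rw [phi'_of_not C hx, phi'_of_not C hy]
    exact h

end E3E5aux

namespace E3E5aux

variable {M : Type*} [CommSemiring M] [LinearOrder M] [IsStrictOrderedRing M] (C : Ctx M)

/-- The setoid of the `J`-distance equivalence. -/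
def st : Setoid M :=
  ⟨sim C, ⟨sim_refl C, fun h => sim_symm C h, fun h h' => sim_trans C h h'⟩⟩

open Classical in
/-- Section of the quotient with the class of `a` centered at `a`. -/
noncomputable def sA : Quotient (st C) → M := fun B =>
  if B = Quotient.mk (st C) C.a then C.a else (Quotient.exists_rep B).choose

open Classical in
/-- Section of the quotient with the class of `b` centered at `b`. -/
noncomputable def tB : Quotient (st C) → M := fun B =>
  if B = Quotient.mk (st C) C.b then C.b else (Quotient.exists_rep B).choose

lemma mk_sA (B : Quotient (st C)) : Quotient.mk (st C) (sA C B) = B := by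
  unfold sA
  split
  · next h => rw [h]
  · exact (Quotient.exists_rep B).choose_spec

lemma mk_tB (B : Quotient (st C)) : Quotient.mk (st C) (tB C B) = B := by
  unfold tB
  split
  · next h => rw [h]
  · exact (Quotient.exists_rep B).choose_spec

lemma sA_a : sA C (Quotient.mk (st C) C.a) = C.a := by
  unfold sA; rw [if_pos rfl]

lemma tB_b : tB C (Quotient.mk (st C) C.b) = C.b := by
  unfold tB; rw [if_pos rfl]

lemma sA_sim (x : M) : sim C (sA C (Quotient.mk (st C) x)) x :=
  Quotient.exact (mk_sA C (Quotient.mk (st C) x))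

lemma tB_sim (x : M) : sim C (tB C (Quotient.mk (st C) x)) x :=
  Quotient.exact (mk_tB C (Quotient.mk (st C) x))

/-- Truncated subtraction given by `hsub`: `u + sub u x = x` when `u ≤ x`. -/
noncomputable def sub (u x : M) : M := if h : u ≤ x then (C.hsub u x h).choose else 0

lemma sub_spec {u x : M} (h : u ≤ x) : u + sub C u x = x := by
  rw [sub, dif_pos h]; exact (C.hsub u x h).choose_spec.symm

lemma sub_eq_of {u x e : M} (h : u + e = x) : sub C u x = e := by
  have hle : u ≤ x := by rw [← h]; exact le_add_of_nonneg_right (C.h0 e)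
  have := sub_spec C hle
  exact add_left_cancel (this.trans h.symm)

/-- Center of the class of `x`, for the source side. -/
noncomputable def uof (x : M) : M := sA C (Quotient.mk (st C) x)
/-- Center of the class of `phi x`, for the target side. -/
noncomputable def vof (x : M) : M := tB C (Quotient.mk (st C) (phi C x))
/-- Center of the class of `phi' y`, source side for the inverse. -/
noncomputable def u'of (y : M) : M := sA C (Quotient.mk (st C) (phi' C y))
/-- Center of the class of `y`, target side for the inverse. -/
noncomputable def v'of (y : M) : M := tB C (Quotient.mk (st C) y)

lemma uof_sim (x : M) : sim C (uof C x) x := sA_sim C x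
lemma vof_sim (x : M) : sim C (vof C x) (phi C x) := tB_sim C _
lemma u'of_sim (y : M) : sim C (u'of C y) (phi' C y) := sA_sim C _
lemma v'of_sim (y : M) : sim C (v'of C y) y := tB_sim C _

lemma uof_congr {x y : M} (h : sim C x y) : uof C x = uof C y := by
  unfold uof; rw [Quotient.sound (s := st C) h]

lemma vof_congr {x y : M} (h : sim C x y) : vof C x = vof C y := by
  unfold vof; rw [Quotient.sound (s := st C) (phi_descent C h)]

lemma u'of_congr {x y : M} (h : sim C x y) : u'of C x = u'of C y := by
  unfold u'of; rw [Quotient.sound (s := st C) (phi'_descent C h)]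

lemma v'of_congr {x y : M} (h : sim C x y) : v'of C x = v'of C y := by
  unfold v'of; rw [Quotient.sound (s := st C) h]

open Classical in
/-- The lifted automorphism. -/
noncomputable def F (x : M) : M :=
  if inJ C x then x
  else if uof C x ≤ x
    then vof C x + sub C (uof C x) x
    else sub C (sub C x (uof C x)) (vof C x)

open Classical in
/-- The inverse of the lifted automorphism. -/
noncomputable def G (y : M) : M :=
  if inJ C y then y
  else if v'of C y ≤ y
    then u'of C y + sub C (v'of C y) y
    else sub C (sub C y (v'of C y)) (u'of C y)

lemma uof_notJ {x : M} (hx : ¬ inJ C x) : ¬ inJ C (uof C x) :=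
  fun h => hx (simJ C (uof_sim C x) h)

lemma vof_notJ {x : M} (hx : ¬ inJ C x) : ¬ inJ C (vof C x) :=
  fun h => phi_notJ C hx (simJ C (vof_sim C x) h)

lemma u'of_notJ {y : M} (hy : ¬ inJ C y) : ¬ inJ C (u'of C y) :=
  fun h => phi'_notJ C hy (simJ C (u'of_sim C y) h)

lemma v'of_notJ {y : M} (hy : ¬ inJ C y) : ¬ inJ C (v'of C y) :=
  fun h => hy (simJ C (v'of_sim C y) h)

lemma sub_inJ_of_sim {u x : M} (h : sim C u x) (hle : u ≤ x) : inJ C (sub C u x) := by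
  obtain ⟨j, hj, _, h2⟩ := h
  have : u + sub C u x ≤ u + j := by rw [sub_spec C hle]; exact h2
  exact Jdown C ((add_le_add_iff_left u).mp this) hj

lemma sub_inJ_of_sim' {x u : M} (h : sim C u x) (hle : x ≤ u) : inJ C (sub C x u) := by
  obtain ⟨j, hj, h1, _⟩ := h
  have : x + sub C x u ≤ x + j := by rw [sub_spec C hle]; exact h1
  exact Jdown C ((add_le_add_iff_left x).mp this) hj

/-- `F x` lies in the class of `phi x`. -/
lemma F_sim {x : M} (hx : ¬ inJ C x) : sim C (F C x) (phi C x) := by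
  unfold F
  rw [if_neg hx]
  by_cases hux : uof C x ≤ x
  · rw [if_pos hux]
    have he : inJ C (sub C (uof C x) x) := sub_inJ_of_sim C (uof_sim C x) hux
    refine sim_trans C ?_ (vof_sim C x)
    exact ⟨sub C (uof C x) x, he, le_refl _,
      le_trans (le_add_of_nonneg_right (C.h0 _)) (le_add_of_nonneg_right (C.h0 _))⟩
  · rw [if_neg hux]
    have hxu : x ≤ uof C x := le_of_not_ge hux
    have he' : inJ C (sub C x (uof C x)) := sub_inJ_of_sim' C (uof_sim C x) hxu
    have hev : sub C x (uof C x) ≤ vof C x :=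
      le_of_lt (J_lt C he' (vof_notJ C hx))
    have hspec : sub C x (uof C x) + sub C (sub C x (uof C x)) (vof C x) = vof C x :=
      sub_spec C hev
    refine sim_trans C ?_ (vof_sim C x)
    have hwv : sub C (sub C x (uof C x)) (vof C x) ≤ vof C x := by
      have h := le_add_of_nonneg_left (a := sub C (sub C x (uof C x)) (vof C x))
        (C.h0 (sub C x (uof C x)))
      rw [hspec] at h
      exact h
    refine ⟨sub C x (uof C x), he', le_trans hwv (le_add_of_nonneg_right (C.h0 _)),
      le_of_eq (hspec.symm.trans (add_comm _ _))⟩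

/-- `G y` lies in the class of `phi' y`. -/
lemma G_sim {y : M} (hy : ¬ inJ C y) : sim C (G C y) (phi' C y) := by
  unfold G
  rw [if_neg hy]
  by_cases hvy : v'of C y ≤ y
  · rw [if_pos hvy]
    have he : inJ C (sub C (v'of C y) y) := sub_inJ_of_sim C (v'of_sim C y) hvy
    refine sim_trans C ?_ (u'of_sim C y)
    exact ⟨sub C (v'of C y) y, he, le_refl _,
      le_trans (le_add_of_nonneg_right (C.h0 _)) (le_add_of_nonneg_right (C.h0 _))⟩
  · rw [if_neg hvy]
    have hyv : y ≤ v'of C y := le_of_not_ge hvy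
    have he' : inJ C (sub C y (v'of C y)) := sub_inJ_of_sim' C (v'of_sim C y) hyv
    have hev : sub C y (v'of C y) ≤ u'of C y :=
      le_of_lt (J_lt C he' (u'of_notJ C hy))
    have hspec : sub C y (v'of C y) + sub C (sub C y (v'of C y)) (u'of C y) = u'of C y :=
      sub_spec C hev
    refine sim_trans C ?_ (u'of_sim C y)
    have hwv : sub C (sub C y (v'of C y)) (u'of C y) ≤ u'of C y := by
      have h := le_add_of_nonneg_left (a := sub C (sub C y (v'of C y)) (u'of C y))
        (C.h0 (sub C y (v'of C y)))
      rw [hspec] at h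
      exact h
    refine ⟨sub C y (v'of C y), he', le_trans hwv (le_add_of_nonneg_right (C.h0 _)),
      le_of_eq (hspec.symm.trans (add_comm _ _))⟩

lemma F_J {x : M} (hx : inJ C x) : F C x = x := by unfold F; rw [if_pos hx]
lemma G_J {y : M} (hy : inJ C y) : G C y = y := by unfold G; rw [if_pos hy]

lemma F_notJ {x : M} (hx : ¬ inJ C x) : ¬ inJ C (F C x) :=
  fun h => phi_notJ C hx (simJ C (F_sim C hx) h)

lemma G_notJ {y : M} (hy : ¬ inJ C y) : ¬ inJ C (G C y) :=
  fun h => phi'_notJ C hy (simJ C (G_sim C hy) h)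

end E3E5aux

namespace E3E5aux

variable {M : Type*} [CommSemiring M] [LinearOrder M] [IsStrictOrderedRing M] (C : Ctx M)

lemma F_strictMono : StrictMono (F C) := by
  intro x y hxy
  by_cases hx : inJ C x <;> by_cases hy : inJ C y
  · rw [F_J C hx, F_J C hy]; exact hxy
  · rw [F_J C hx]; exact J_lt C hx (F_notJ C hy)
  · exact absurd (Jdown C (le_of_lt hxy) hy) hx
  · by_cases hs : sim C x y
    · have huv : uof C x = uof C y := uof_congr C hs
      have hvv : vof C x = vof C y := vof_congr C hs
      have husim : sim C (uof C x) y := by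
        have h := uof_sim C y; rw [← huv] at h; exact h
      unfold F
      rw [if_neg hx, if_neg hy, ← huv, ← hvv]
      by_cases h1 : uof C x ≤ x
      · have h2 : uof C x ≤ y := le_trans h1 (le_of_lt hxy)
        rw [if_pos h1, if_pos h2]
        have hlt : sub C (uof C x) x < sub C (uof C x) y := by
          have hcomp : uof C x + sub C (uof C x) x < uof C x + sub C (uof C x) y := by
            rw [sub_spec C h1, sub_spec C h2]; exact hxy
          exact (add_lt_add_iff_left _).mp hcomp
        exact add_lt_add_right hlt _
      · have hxu : x ≤ uof C x := le_of_not_ge h1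
        have hexJ : inJ C (sub C x (uof C x)) := sub_inJ_of_sim' C (uof_sim C x) hxu
        have hex_le : sub C x (uof C x) ≤ vof C x :=
          le_of_lt (J_lt C hexJ (vof_notJ C hx))
        have hspecx : sub C x (uof C x) + sub C (sub C x (uof C x)) (vof C x) = vof C x :=
          sub_spec C hex_le
        have hne : sub C x (uof C x) ≠ 0 := by
          intro h0'
          apply h1
          have hxeq := sub_spec C hxu
          rw [h0', add_zero] at hxeq
          rw [← hxeq]
        have hpos : 0 < sub C x (uof C x) := lt_of_le_of_ne (C.h0 _) (Ne.symm hne)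
        have hwv : sub C (sub C x (uof C x)) (vof C x) < vof C x := by
          have h := lt_add_of_pos_left (sub C (sub C x (uof C x)) (vof C x)) hpos
          rw [hspecx] at h
          exact h
        by_cases h2 : uof C x ≤ y
        · rw [if_neg h1, if_pos h2]
          exact lt_of_lt_of_le hwv (le_add_of_nonneg_right (C.h0 _))
        · rw [if_neg h1, if_neg h2]
          have hyu : y ≤ uof C x := le_of_not_ge h2
          have heyJ : inJ C (sub C y (uof C x)) := sub_inJ_of_sim' C husim hyu
          have hey_le : sub C y (uof C x) ≤ vof C x :=
            le_of_lt (J_lt C heyJ (vof_notJ C hx))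
          have hspecy : sub C y (uof C x) + sub C (sub C y (uof C x)) (vof C x) = vof C x :=
            sub_spec C hey_le
          have hey_ex : sub C y (uof C x) < sub C x (uof C x) := by
            by_contra hcon
            have hle : sub C x (uof C x) ≤ sub C y (uof C x) := le_of_not_gt hcon
            have habs : uof C x < uof C x := by
              calc uof C x = x + sub C x (uof C x) := (sub_spec C hxu).symm
              _ < y + sub C x (uof C x) := add_lt_add_left hxy _
              _ ≤ y + sub C y (uof C x) := add_le_add_right hle y
              _ = uof C x := sub_spec C hyu
            exact absurd habs (lt_irrefl _)
          by_contra hcon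
          have hle : sub C (sub C y (uof C x)) (vof C x) ≤ sub C (sub C x (uof C x)) (vof C x) :=
            le_of_not_gt hcon
          have habs : vof C x < vof C x := by
            calc vof C x = sub C y (uof C x) + sub C (sub C y (uof C x)) (vof C x) :=
              hspecy.symm
            _ ≤ sub C y (uof C x) + sub C (sub C x (uof C x)) (vof C x) :=
                add_le_add_right hle _
            _ < sub C x (uof C x) + sub C (sub C x (uof C x)) (vof C x) :=
                add_lt_add_left hey_ex _
            _ = vof C x := hspecx
          exact absurd habs (lt_irrefl _)
    · have h1 : phi C x < phi C y := phi_mono C hxy hs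
      have h2 : ¬ sim C (phi C x) (phi C y) := fun h => hs (phi_inj C h)
      exact sim_sep C h1 h2 (sim_symm C (F_sim C hx)) (sim_symm C (F_sim C hy))

lemma GF (x : M) : G C (F C x) = x := by
  by_cases hx : inJ C x
  · rw [F_J C hx, G_J C hx]
  · have hFx : ¬ inJ C (F C x) := F_notJ C hx
    have hsimF : sim C (F C x) (phi C x) := F_sim C hx
    have hv' : v'of C (F C x) = vof C x := by
      unfold v'of vof; rw [Quotient.sound (s := st C) hsimF]
    have hu' : u'of C (F C x) = uof C x := by
      unfold u'of uof
      have hs1 : sim C (phi' C (F C x)) (phi' C (phi C x)) := phi'_descent C hsimF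
      have hs2 : sim C (phi' C (phi C x)) x := phi'_phi C x
      rw [Quotient.sound (s := st C) (sim_trans C hs1 hs2)]
    unfold G
    rw [if_neg hFx, hv', hu']
    unfold F
    rw [if_neg hx]
    by_cases h1 : uof C x ≤ x
    · rw [if_pos h1]
      rw [if_pos (le_add_of_nonneg_right (C.h0 (sub C (uof C x) x)))]
      rw [sub_eq_of C rfl]
      exact sub_spec C h1
    · rw [if_neg h1]
      have hxu : x ≤ uof C x := le_of_not_ge h1
      have hexJ : inJ C (sub C x (uof C x)) := sub_inJ_of_sim' C (uof_sim C x) hxu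
      have hex_le : sub C x (uof C x) ≤ vof C x :=
        le_of_lt (J_lt C hexJ (vof_notJ C hx))
      have hspecx : sub C x (uof C x) + sub C (sub C x (uof C x)) (vof C x) = vof C x :=
        sub_spec C hex_le
      have hne : sub C x (uof C x) ≠ 0 := by
        intro h0'
        apply h1
        have hxeq := sub_spec C hxu
        rw [h0', add_zero] at hxeq
        rw [← hxeq]
      have hpos : 0 < sub C x (uof C x) := lt_of_le_of_ne (C.h0 _) (Ne.symm hne)
      have hwv : sub C (sub C x (uof C x)) (vof C x) < vof C x := by
        have h := lt_add_of_pos_left (sub C (sub C x (uof C x)) (vof C x)) hpos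
        rw [hspecx] at h
        exact h
      rw [if_neg (not_le_of_gt hwv)]
      have h2 : sub C (sub C (sub C x (uof C x)) (vof C x)) (vof C x) = sub C x (uof C x) :=
        sub_eq_of C (by rw [add_comm]; exact hspecx)
      rw [h2]
      exact sub_eq_of C (by rw [add_comm]; exact sub_spec C hxu)

lemma FG (y : M) : F C (G C y) = y := by
  by_cases hy : inJ C y
  · rw [G_J C hy, F_J C hy]
  · have hGy : ¬ inJ C (G C y) := G_notJ C hy
    have hsimG : sim C (G C y) (phi' C y) := G_sim C hy
    have hu : uof C (G C y) = u'of C y := by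
      unfold uof u'of; rw [Quotient.sound (s := st C) hsimG]
    have hv : vof C (G C y) = v'of C y := by
      unfold vof v'of
      have hs1 : sim C (phi C (G C y)) (phi C (phi' C y)) := phi_descent C hsimG
      have hs2 : sim C (phi C (phi' C y)) y := phi_phi' C y
      rw [Quotient.sound (s := st C) (sim_trans C hs1 hs2)]
    unfold F
    rw [if_neg hGy, hu, hv]
    unfold G
    rw [if_neg hy]
    by_cases h1 : v'of C y ≤ y
    · rw [if_pos h1]
      rw [if_pos (le_add_of_nonneg_right (C.h0 (sub C (v'of C y) y)))]
      rw [sub_eq_of C rfl]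
      exact sub_spec C h1
    · rw [if_neg h1]
      have hyv : y ≤ v'of C y := le_of_not_ge h1
      have heyJ : inJ C (sub C y (v'of C y)) := sub_inJ_of_sim' C (v'of_sim C y) hyv
      have hey_le : sub C y (v'of C y) ≤ u'of C y :=
        le_of_lt (J_lt C heyJ (u'of_notJ C hy))
      have hspecy : sub C y (v'of C y) + sub C (sub C y (v'of C y)) (u'of C y) = u'of C y :=
        sub_spec C hey_le
      have hne : sub C y (v'of C y) ≠ 0 := by
        intro h0'
        apply h1
        have hyeq := sub_spec C hyv
        rw [h0', add_zero] at hyeq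
        rw [← hyeq]
      have hpos : 0 < sub C y (v'of C y) := lt_of_le_of_ne (C.h0 _) (Ne.symm hne)
      have hwu : sub C (sub C y (v'of C y)) (u'of C y) < u'of C y := by
        have h := lt_add_of_pos_left (sub C (sub C y (v'of C y)) (u'of C y)) hpos
        rw [hspecy] at h
        exact h
      rw [if_neg (not_le_of_gt hwu)]
      have h2 : sub C (sub C (sub C y (v'of C y)) (u'of C y)) (u'of C y) = sub C y (v'of C y) :=
        sub_eq_of C (by rw [add_comm]; exact hspecy)
      rw [h2]
      exact sub_eq_of C (by rw [add_comm]; exact sub_spec C hyv)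

/-- The lifted order automorphism. -/
noncomputable def Fiso : M ≃o M where
  toEquiv := ⟨F C, G C, GF C, FG C⟩
  map_rel_iff' := by
    intro x y
    exact (F_strictMono C).le_iff_le

lemma phi_a_sim_b : sim C (phi C C.a) C.b := by
  rw [phi_of_Gam C (Gam_a C)]
  obtain ⟨r, hs, hr⟩ := qdivA_spec C C.a
  have h1 : qdivA C C.a ≤ C.b := by
    have hle : C.a * qdivA C C.a ≤ C.a * C.b := by
      calc C.a * qdivA C C.a ≤ C.a * qdivA C C.a + r := le_add_of_nonneg_right (C.h0 r)
      _ = C.a * C.b := hs.symm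
    exact le_of_mul_le_mul_left hle (a_pos C)
  have h2 : C.b ≤ qdivA C C.a + 1 := by
    have hlt : C.a * C.b < C.a * (qdivA C C.a + 1) := by
      calc C.a * C.b = C.a * qdivA C C.a + r := hs
      _ < C.a * qdivA C C.a + C.a := add_lt_add_right hr _
      _ = C.a * (qdivA C C.a + 1) := by ring
    exact le_of_lt (lt_of_mul_lt_mul_left hlt (C.h0 _))
  exact ⟨1, J1 C, le_trans h1 (le_add_of_nonneg_right (C.h0 1)), h2⟩

lemma Fiso_a : Fiso C C.a = C.b := by
  show F C C.a = C.b
  unfold F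
  rw [if_neg (notJa C)]
  have hu : uof C C.a = C.a := by unfold uof; exact sA_a C
  rw [hu, if_pos (le_refl C.a)]
  have hsub0 : sub C C.a C.a = 0 := sub_eq_of C (add_zero _)
  rw [hsub0, add_zero]
  unfold vof
  rw [Quotient.sound (s := st C) (phi_a_sim_b C)]
  exact tB_b C

theorem main (C : Ctx M) : ∃ f : M ≃o M, f C.a = C.b := ⟨Fiso C, Fiso_a C⟩

end E3E5aux


/-- `a E³ b` implies `a E⁵ b`, i.e. some order automorphism of `M`
maps `a` to `b`. -/
theorem E3_implies_E5 {M : Type*} [CommSemiring M] [LinearOrder M] [IsStrictOrderedRing M]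
    (h0 : ∀ x : M, 0 ≤ x)
    (hsub : ∀ a b : M, a ≤ b → ∃ c, b = a + c)
    (hdiv : ∀ a b : M, b ≠ 0 → ∃ q r : M, a = b * q + r ∧ r < b)
    (a b : M) (ha : Nonstd a) (hb : Nonstd b) (hab : E3 a b) :
    ∃ f : M ≃o M, f a = b := by
  obtain ⟨c, hpow, h1, h2⟩ := hab
  rcases le_total c 2 with hc | hc
  · have hpow2 : ∀ n : ℕ, (2 : M) ^ n < a ∧ (2 : M) ^ n < b := by
      intro n
      constructor
      · have := ha (2 ^ n); push_cast at this; exact this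
      · have := hb (2 ^ n); push_cast at this; exact this
    exact E3E5aux.main ⟨h0, hsub, hdiv, a, b, 2, ha, hb, le_refl _, hpow2,
      lt_of_lt_of_le h1 (mul_le_mul_of_nonneg_left hc (h0 b)),
      lt_of_lt_of_le h2 (mul_le_mul_of_nonneg_left hc (h0 a))⟩
  · exact E3E5aux.main ⟨h0, hsub, hdiv, a, b, c, ha, hb, hc, hpow, h1, h2⟩
end

section
/- Assume M₁ is 3-order-rigid and f : M₁ ≃o M₂ is an order isomorphism. Then for all nonstandard a, b ∈ M₁: a E³ b in M₁ iff f a E³ f b in M₂, and a E⁴ b in M₁ iff f a E⁴ f b in M₂. -/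
section Basic
variable {M : Type*} [CommSemiring M] [LinearOrder M] [IsStrictOrderedRing M]

theorem my_succ_le (hd : ∀ a x : M, ¬(a < x ∧ x < a + 1)) {x y : M} (h : x < y) : x + 1 ≤ y := by
  by_contra hc
  exact hd x y ⟨h, not_le.mp hc⟩

theorem my_one_le (hd : ∀ a x : M, ¬(a < x ∧ x < a + 1)) {t : M} (h : 0 < t) : 1 ≤ t := by
  have := my_succ_le hd h; rwa [zero_add] at this

theorem my_lt_cast (h0 : ∀ x : M, 0 ≤ x) (hd : ∀ a x : M, ¬(a < x ∧ x < a + 1)) :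
    ∀ (n : ℕ) (y : M), y < (n : M) → ∃ k : ℕ, k < n ∧ y = (k : M) := by
  intro n
  induction n with
  | zero => intro y hy; simp only [Nat.cast_zero] at hy; exact absurd hy (not_lt.mpr (h0 y))
  | succ n ih =>
    intro y hy
    rcases lt_or_ge y (n : M) with h | h
    · obtain ⟨k, hk, rfl⟩ := ih y h; exact ⟨k, by omega, rfl⟩
    · refine ⟨n, by omega, ?_⟩
      have hy' : y < (n : M) + 1 := by rwa [Nat.cast_succ] at hy
      rcases eq_or_lt_of_le h with h' | h'
      · exact h'.symm
      · exact absurd ⟨h', hy'⟩ (hd (n : M) y)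

theorem nonstd_pos {a : M} (ha : Nonstd a) : 0 < a := by
  have := ha 0; simpa using this

theorem nonstd_one_lt {a : M} (ha : Nonstd a) : 1 < a := by
  have := ha 1; simpa using this

theorem nonstd_mono {a b : M} (ha : Nonstd a) (h : a ≤ b) : Nonstd b :=
  fun n => lt_of_lt_of_le (ha n) h

/-- `c` is (multiplicatively) small relative to `a`: all powers are below `a`. -/
def Sm (c a : M) : Prop := ∀ n : ℕ, c ^ n < a

theorem sm_trick (h0 : ∀ x : M, 0 ≤ x) {e a : M} (h : ∀ k : ℕ, e ^ k < a * a) : Sm e a := by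
  intro k
  by_contra hc
  push_neg at hc
  have h1 : a * a ≤ e ^ k * e ^ k := mul_le_mul hc hc (h0 a) (pow_nonneg (h0 e) k)
  have h2 : e ^ k * e ^ k = e ^ (k + k) := (pow_add e k k).symm
  exact absurd (h (k + k)) (not_lt.mpr (h2 ▸ h1))

theorem sm_mono (h0 : ∀ x : M, 0 ≤ x) {q r a : M} (hqr : q ≤ r) (h : Sm r a) : Sm q a :=
  fun n => lt_of_le_of_lt (pow_le_pow_left₀ (h0 q) hqr n) (h n)

theorem sm_mul (h0 : ∀ x : M, 0 ≤ x) {c e a : M} (hc : Sm c a) (he : Sm e a) : Sm (c * e) a := by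
  intro n
  have hM : c * e ≤ max c e * max c e :=
    mul_le_mul (le_max_left c e) (le_max_right c e) (h0 e) (le_trans (h0 c) (le_max_left c e))
  have h1 : (c * e) ^ n ≤ (max c e * max c e) ^ n :=
    pow_le_pow_left₀ (mul_nonneg (h0 c) (h0 e)) hM n
  have h2 : (max c e * max c e) ^ n = max c e ^ (n + n) := by
    rw [mul_pow, ← pow_add]
  refine lt_of_le_of_lt h1 ?_
  rw [h2]
  rcases max_choice c e with h | h <;> rw [h]
  · exact hc (n + n)
  · exact he (n + n)

theorem sm_cast {a : M} (ha : Nonstd a) (k : ℕ) : Sm (k : M) a := by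
  intro n
  rw [← Nat.cast_pow]
  exact ha _

theorem sm_succ (h0 : ∀ x : M, 0 ≤ x) {q a : M} (ha : Nonstd a) (hq : Sm q a) (h1 : 1 ≤ q) :
    Sm (q + 1) a := by
  have h2 : q + 1 ≤ q * 2 := by
    rw [mul_two]; exact add_le_add_right h1 q
  have h3 : Sm (q * 2) a := by
    have : Sm ((2 : ℕ) : M) a := sm_cast ha 2
    rw [Nat.cast_ofNat] at this
    exact sm_mul h0 hq this
  exact sm_mono h0 h2 h3

end Basic

section IsoTools

/-- restriction of an order iso to an initial segment -/
def segIso {M₁ M₂ : Type*} [CommSemiring M₁] [LinearOrder M₁] [IsStrictOrderedRing M₁] [CommSemiring M₂] [LinearOrder M₂] [IsStrictOrderedRing M₂]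
    (f : M₁ ≃o M₂) (x : M₁) : {z : M₁ // z < x} ≃o {y : M₂ // y < f x} where
  toFun z := ⟨f z.1, f.lt_iff_lt.mpr z.2⟩
  invFun y := ⟨f.symm y.1, by
    have := f.symm.lt_iff_lt.mpr (show y.1 < f x from y.2)
    rwa [f.symm_apply_apply] at this⟩
  left_inv z := by simp
  right_inv y := by simp
  map_rel_iff' := by
    intro p q
    exact ⟨fun h => f.le_iff_le.mp h, fun h => f.le_iff_le.mpr h⟩

/-- congruence of lexicographic products -/
def lexCongr {α β γ δ : Type*} [LinearOrder α] [LinearOrder β] [LinearOrder γ] [LinearOrder δ]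
    (e₁ : α ≃o γ) (e₂ : β ≃o δ) : (α ×ₗ β) ≃o (γ ×ₗ δ) where
  toFun p := toLex (e₁ (ofLex p).1, e₂ (ofLex p).2)
  invFun p := toLex (e₁.symm (ofLex p).1, e₂.symm (ofLex p).2)
  left_inv p := by simp
  right_inv p := by simp
  map_rel_iff' := by
    intro p q
    show toLex (e₁ (ofLex p).1, e₂ (ofLex p).2) ≤ toLex (e₁ (ofLex q).1, e₂ (ofLex q).2) ↔
      toLex (ofLex p) ≤ toLex (ofLex q)
    rw [Prod.Lex.le_iff, Prod.Lex.le_iff]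
    simp [e₁.lt_iff_lt, e₂.le_iff_le, EquivLike.apply_eq_iff_eq]

end IsoTools


section Div
variable {M : Type*} [CommSemiring M] [LinearOrder M] [IsStrictOrderedRing M]

/-- initial segment of a product is lexicographic product of initial segments -/
noncomputable def divIso (h0 : ∀ x : M, 0 ≤ x) (hd : ∀ a x : M, ¬(a < x ∧ x < a + 1))
    (hdiv : ∀ a b : M, b ≠ 0 → ∃ q r : M, a = b * q + r ∧ r < b)
    (u v : M) (hu : u ≠ 0) :
    ({q : M // q < v} ×ₗ {r : M // r < u}) ≃o {z : M // z < u * v} := by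
  have hmem : ∀ p : {q : M // q < v} × {r : M // r < u}, u * p.1.1 + p.2.1 < u * v := by
    intro p
    calc u * p.1.1 + p.2.1 < u * p.1.1 + u := add_lt_add_right p.2.2 _
    _ = u * (p.1.1 + 1) := by ring
    _ ≤ u * v := mul_le_mul_of_nonneg_left (my_succ_le hd p.1.2) (h0 u)
  refine StrictMono.orderIsoOfSurjective
    (fun p => ⟨u * (ofLex p).1.1 + (ofLex p).2.1, hmem (ofLex p)⟩) ?_ ?_
  · intro p q hpq
    rcases Prod.Lex.lt_iff.mp hpq with h | ⟨h1, h2⟩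
    · have hq : (ofLex p).1.1 < (ofLex q).1.1 := h
      show u * (ofLex p).1.1 + (ofLex p).2.1 < u * (ofLex q).1.1 + (ofLex q).2.1
      calc u * (ofLex p).1.1 + (ofLex p).2.1 < u * (ofLex p).1.1 + u := add_lt_add_right (ofLex p).2.2 _
      _ = u * ((ofLex p).1.1 + 1) := by ring
      _ ≤ u * (ofLex q).1.1 := mul_le_mul_of_nonneg_left (my_succ_le hd hq) (h0 u)
      _ ≤ u * (ofLex q).1.1 + (ofLex q).2.1 := le_add_of_nonneg_right (h0 _)
    · show u * (ofLex p).1.1 + (ofLex p).2.1 < u * (ofLex q).1.1 + (ofLex q).2.1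
      have h1' : (ofLex p).1.1 = (ofLex q).1.1 := congrArg Subtype.val h1
      rw [h1']
      exact add_lt_add_right (show (ofLex p).2.1 < (ofLex q).2.1 from h2) _
  · rintro ⟨z, hz⟩
    obtain ⟨q, r, heq, hr⟩ := hdiv z u hu
    have hq : q < v := by
      by_contra hvq
      have h1 : u * v ≤ u * q := mul_le_mul_of_nonneg_left (not_lt.mp hvq) (h0 u)
      have h2 : u * q ≤ z := heq ▸ le_add_of_nonneg_right (h0 r)
      exact absurd hz (not_lt.mpr (le_trans h1 h2))
    refine ⟨toLex (⟨q, hq⟩, ⟨r, hr⟩), ?_⟩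
    apply Subtype.ext
    exact heq.symm

theorem seg_one_eq_zero (h0 : ∀ x : M, 0 ≤ x) (hd : ∀ a x : M, ¬(a < x ∧ x < a + 1))
    {z : M} (hz : z < 1) : z = 0 := by
  rcases eq_or_lt_of_le (h0 z) with h | h
  · exact h.symm
  · exfalso
    have := my_succ_le hd h
    rw [zero_add] at this
    exact absurd hz (not_lt.mpr this)

end Div

/-- the singleton segments below 1 are isomorphic in any two such structures -/
def segOneIso {M₁ M₂ : Type*} [CommSemiring M₁] [LinearOrder M₁] [IsStrictOrderedRing M₁] [CommSemiring M₂] [LinearOrder M₂] [IsStrictOrderedRing M₂]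
    (h0₁ : ∀ x : M₁, 0 ≤ x) (hd₁ : ∀ a x : M₁, ¬(a < x ∧ x < a + 1))
    (h0₂ : ∀ x : M₂, 0 ≤ x) (hd₂ : ∀ a x : M₂, ¬(a < x ∧ x < a + 1)) :
    {z : M₁ // z < 1} ≃o {z : M₂ // z < 1} where
  toFun _ := ⟨0, zero_lt_one⟩
  invFun _ := ⟨0, zero_lt_one⟩
  left_inv z := Subtype.ext (seg_one_eq_zero h0₁ hd₁ z.2).symm
  right_inv z := Subtype.ext (seg_one_eq_zero h0₂ hd₂ z.2).symm
  map_rel_iff' := by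
    intro p q
    refine iff_of_true le_rfl ?_
    have : p.1 = q.1 := (seg_one_eq_zero h0₁ hd₁ p.2).trans (seg_one_eq_zero h0₁ hd₁ q.2).symm
    exact le_of_eq (Subtype.ext this)

theorem iso_map_zero {M₁ M₂ : Type*} [CommSemiring M₁] [LinearOrder M₁] [IsStrictOrderedRing M₁] [CommSemiring M₂] [LinearOrder M₂] [IsStrictOrderedRing M₂]
    (h0₁ : ∀ x : M₁, 0 ≤ x) (h0₂ : ∀ x : M₂, 0 ≤ x) (f : M₁ ≃o M₂) : f 0 = 0 := by
  refine le_antisymm ?_ (h0₂ _)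
  have : f 0 ≤ f (f.symm 0) := f.le_iff_le.mpr (h0₁ (f.symm 0))
  rwa [f.apply_symm_apply] at this
section Main
variable {M₁ M₂ : Type*} [CommSemiring M₁] [LinearOrder M₁] [IsStrictOrderedRing M₁] [CommSemiring M₂] [LinearOrder M₂] [IsStrictOrderedRing M₂]

/-- segments below corresponding powers are order isomorphic -/
theorem powSegIso (h0₁ : ∀ x : M₁, 0 ≤ x) (hd₁ : ∀ a x : M₁, ¬(a < x ∧ x < a + 1))
    (hdiv₁ : ∀ a b : M₁, b ≠ 0 → ∃ q r : M₁, a = b * q + r ∧ r < b)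
    (h0₂ : ∀ x : M₂, 0 ≤ x) (hd₂ : ∀ a x : M₂, ¬(a < x ∧ x < a + 1))
    (hdiv₂ : ∀ a b : M₂, b ≠ 0 → ∃ q r : M₂, a = b * q + r ∧ r < b)
    (f : M₁ ≃o M₂) (c : M₁) (hc : 0 < c) :
    ∀ n : ℕ, Nonempty ({z : M₁ // z < c ^ n} ≃o {z : M₂ // z < f c ^ n}) := by
  have hfc : (0 : M₂) < f c := by
    rw [← iso_map_zero h0₁ h0₂ f]
    exact f.lt_iff_lt.mpr hc
  intro n
  induction n with
  | zero =>
    rw [pow_zero, pow_zero]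
    exact ⟨segOneIso h0₁ hd₁ h0₂ hd₂⟩
  | succ n ih =>
    obtain ⟨I⟩ := ih
    rw [pow_succ', pow_succ']
    exact ⟨((divIso h0₁ hd₁ hdiv₁ c (c ^ n) (ne_of_gt hc)).symm.trans
      ((lexCongr I (segIso f c)).trans
        (divIso h0₂ hd₂ hdiv₂ (f c) (f c ^ n) (ne_of_gt hfc))))⟩

/-- an order isomorphism cannot move the `k`-th element above the `(k+1)`-th slot -/
theorem iso_cast_lt (h0₁ : ∀ x : M₁, 0 ≤ x) (hd₁ : ∀ a x : M₁, ¬(a < x ∧ x < a + 1))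
    (g : M₁ ≃o M₂) (k : ℕ) : g (k : M₁) < ((k + 1 : ℕ) : M₂) := by
  by_contra hc
  push_neg at hc
  have key : ∀ j : Fin (k + 2), ∃ m : ℕ, m < k + 1 ∧ g.symm (((j : ℕ) : M₂)) = (m : M₁) := by
    intro j
    apply my_lt_cast h0₁ hd₁ (k + 1)
    have h1 : (((j : ℕ)) : M₂) ≤ ((k + 1 : ℕ) : M₂) := Nat.cast_le.mpr (by omega)
    have h2 : g.symm (((j : ℕ)) : M₂) ≤ (k : M₁) := by
      have h3 := g.symm.le_iff_le.mpr (le_trans h1 hc)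
      rwa [g.symm_apply_apply] at h3
    refine lt_of_le_of_lt h2 ?_
    exact_mod_cast Nat.cast_lt.mpr (Nat.lt_succ_self k)
  choose m hm hmeq using key
  have hsm : StrictMono fun j : Fin (k + 2) => (⟨m j, hm j⟩ : Fin (k + 1)) := by
    intro i j hij
    have h1 : (((i : ℕ)) : M₂) < (((j : ℕ)) : M₂) := Nat.cast_lt.mpr hij
    have h2 := g.symm.lt_iff_lt.mpr h1
    rw [hmeq i, hmeq j] at h2
    exact Fin.mk_lt_mk.mpr (Nat.cast_lt.mp h2)
  have hcard := Fintype.card_le_of_injective _ hsm.injective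
  simp only [Fintype.card_fin] at hcard
  omega

theorem std_cast {M : Type*} [CommSemiring M] [LinearOrder M] [IsStrictOrderedRing M]
    (h0 : ∀ x : M, 0 ≤ x) (hd : ∀ a x : M, ¬(a < x ∧ x < a + 1))
    {c : M} (hc : ¬Nonstd c) : ∃ k : ℕ, c = (k : M) := by
  rw [Nonstd] at hc
  push_neg at hc
  obtain ⟨n, hn⟩ := hc
  have h1 : c < ((n + 1 : ℕ) : M) := by
    refine lt_of_le_of_lt hn ?_
    exact_mod_cast Nat.cast_lt.mpr (Nat.lt_succ_self n)
  obtain ⟨k, _, hk⟩ := my_lt_cast h0 hd (n + 1) c h1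
  exact ⟨k, hk⟩

theorem nonstd_map (h0₁ : ∀ x : M₁, 0 ≤ x) (hd₁ : ∀ a x : M₁, ¬(a < x ∧ x < a + 1))
    (h0₂ : ∀ x : M₂, 0 ≤ x) (hd₂ : ∀ a x : M₂, ¬(a < x ∧ x < a + 1))
    (g : M₁ ≃o M₂) {a : M₁} (ha : Nonstd a) : Nonstd (g a) := by
  by_contra hc
  obtain ⟨j, hj⟩ := std_cast h0₂ hd₂ hc
  have h1 := iso_cast_lt h0₂ hd₂ g.symm j
  rw [← hj, g.symm_apply_apply] at h1
  exact absurd (ha (j + 1)) (not_lt.mpr (le_of_lt h1))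

end Main
section Main2
variable {M₁ M₂ : Type*} [CommSemiring M₁] [LinearOrder M₁] [IsStrictOrderedRing M₁] [CommSemiring M₂] [LinearOrder M₂] [IsStrictOrderedRing M₂]
variable (h0₁ : ∀ x : M₁, 0 ≤ x) (h0₂ : ∀ x : M₂, 0 ≤ x)
variable (hd₁ : ∀ a x : M₁, ¬(a < x ∧ x < a + 1)) (hd₂ : ∀ a x : M₂, ¬(a < x ∧ x < a + 1))
variable (hdiv₁ : ∀ a b : M₁, b ≠ 0 → ∃ q r : M₁, a = b * q + r ∧ r < b)
variable (hdiv₂ : ∀ a b : M₂, b ≠ 0 → ∃ q r : M₂, a = b * q + r ∧ r < b)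
variable (hrig : OrderRigid3 M₁) (f : M₁ ≃o M₂)

include h0₁ h0₂ hd₁ hd₂ hdiv₁ hdiv₂ hrig

/-- key rigidity lemma: `s * t` is E3-equivalent to the pullback of `f s * f t` -/
theorem rig_mul (s t : M₁) (hs : Nonstd s) (ht : 0 < t) :
    E3 (s * t) (f.symm (f s * f t)) := by
  have ht1 : (1 : M₁) ≤ t := my_one_le hd₁ ht
  have hft : (0 : M₂) < f t := by
    rw [← iso_map_zero h0₁ h0₂ f]; exact f.lt_iff_lt.mpr ht
  have hft1 : (1 : M₂) ≤ f t := my_one_le hd₂ hft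
  have hs0 : s ≠ 0 := ne_of_gt (nonstd_pos hs)
  have hfs0 : f s ≠ 0 := by
    rw [← iso_map_zero h0₁ h0₂ f]
    exact fun h => hs0 (f.injective h)
  have h1 : Nonstd (s * t) := nonstd_mono hs (le_mul_of_one_le_right (h0₁ s) ht1)
  have h2 : Nonstd (f.symm (f s * f t)) := by
    apply nonstd_mono hs
    have h3 : f s ≤ f s * f t := le_mul_of_one_le_right (h0₂ (f s)) hft1
    have h4 := f.symm.le_iff_le.mpr h3
    rwa [f.symm_apply_apply] at h4
  apply hrig _ _ h1 h2
  exact ⟨(divIso h0₁ hd₁ hdiv₁ s t hs0).symm.trans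
    ((lexCongr (segIso f t) (segIso f s)).trans
      ((divIso h0₂ hd₂ hdiv₂ (f s) (f t) hfs0).trans (segIso f.symm (f s * f t))))⟩

/-- smallness is preserved under `f` -/
theorem sm_map (a c : M₁) (ha : Nonstd a) (hc : Sm c a) : Sm (f c) (f a) := by
  have hfa : Nonstd (f a) := nonstd_map h0₁ hd₁ h0₂ hd₂ f ha
  intro n
  match n with
  | 0 =>
    rw [pow_zero]
    have := hfa 1; rwa [Nat.cast_one] at this
  | Nat.succ k =>
    by_cases hcc : Nonstd c
    · have hc0 : (0 : M₁) < c := nonstd_pos hcc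
      obtain ⟨I⟩ := powSegIso h0₁ hd₁ hdiv₁ h0₂ hd₂ hdiv₂ f c hc0 (k + 1)
      have hiso : Nonempty ({z : M₁ // z < c ^ (k + 1)} ≃o
          {z : M₁ // z < f.symm (f c ^ (k + 1))}) :=
        ⟨I.trans (segIso f.symm (f c ^ (k + 1)))⟩
      have hfcc : Nonstd (f c) := nonstd_map h0₁ hd₁ h0₂ hd₂ f hcc
      have h1 : Nonstd (c ^ (k + 1)) :=
        nonstd_mono hcc (le_self_pow₀ (le_of_lt (nonstd_one_lt hcc)) (by omega))
      have h2 : Nonstd (f.symm (f c ^ (k + 1))) := by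
        apply nonstd_mono hcc
        have h3 : f c ≤ f c ^ (k + 1) :=
          le_self_pow₀ (le_of_lt (nonstd_one_lt hfcc)) (by omega)
        have h4 := f.symm.le_iff_le.mpr h3
        rwa [f.symm_apply_apply] at h4
      obtain ⟨e, he, -, h4⟩ := hrig _ _ h1 h2 hiso
      have he1 : e ≤ c ^ (k + 1) := by
        have := (he 1).1; rw [pow_one] at this; exact le_of_lt this
      have hWlt : f.symm (f c ^ (k + 1)) < a := by
        calc f.symm (f c ^ (k + 1)) < c ^ (k + 1) * e := h4
        _ ≤ c ^ (k + 1) * c ^ (k + 1) :=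
            mul_le_mul_of_nonneg_left he1 (pow_nonneg (h0₁ c) _)
        _ = c ^ ((k + 1) + (k + 1)) := (pow_add c _ _).symm
        _ < a := hc _
      have h5 := f.lt_iff_lt.mpr hWlt
      rwa [f.apply_symm_apply] at h5
    · obtain ⟨k0, hk0⟩ := std_cast h0₁ hd₁ hcc
      have h1 : f c < ((k0 + 1 : ℕ) : M₂) := by
        rw [hk0]; exact iso_cast_lt h0₁ hd₁ f k0
      obtain ⟨j, _, hjeq⟩ := my_lt_cast h0₂ hd₂ (k0 + 1) (f c) h1
      rw [hjeq, ← Nat.cast_pow]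
      exact hfa _

/-- smallness is reflected by `f` -/
theorem sm_pull (a c : M₁) (ha : Nonstd a) (hc : Sm (f c) (f a)) : Sm c a := by
  intro n
  match n with
  | 0 =>
    rw [pow_zero]
    have := ha 1; rwa [Nat.cast_one] at this
  | Nat.succ k =>
    by_cases hcc : Nonstd c
    · by_contra hle
      push_neg at hle
      have hc0 : (0 : M₁) < c := nonstd_pos hcc
      set N := (k + 1) + (k + 1) with hN
      obtain ⟨I⟩ := powSegIso h0₁ hd₁ hdiv₁ h0₂ hd₂ hdiv₂ f c hc0 N
      have hiso : Nonempty ({z : M₁ // z < c ^ N} ≃o {z : M₁ // z < f.symm (f c ^ N)}) :=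
        ⟨I.trans (segIso f.symm (f c ^ N))⟩
      have hfcc : Nonstd (f c) := nonstd_map h0₁ hd₁ h0₂ hd₂ f hcc
      have h1 : Nonstd (c ^ N) :=
        nonstd_mono hcc (le_self_pow₀ (le_of_lt (nonstd_one_lt hcc)) (by omega))
      have h2 : Nonstd (f.symm (f c ^ N)) := by
        apply nonstd_mono hcc
        have h3 : f c ≤ f c ^ N := le_self_pow₀ (le_of_lt (nonstd_one_lt hfcc)) (by omega)
        have h4 := f.symm.le_iff_le.mpr h3
        rwa [f.symm_apply_apply] at h4
      obtain ⟨e, he, h3, -⟩ := hrig _ _ h1 h2 hiso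
      have he1 : e ≤ f.symm (f c ^ N) := by
        have := (he 1).2; rw [pow_one] at this; exact le_of_lt this
      have hWa : f.symm (f c ^ N) < a := by
        have h5 := f.symm.lt_iff_lt.mpr (hc N)
        rwa [f.symm_apply_apply] at h5
      have hlt : c ^ N < a * a := by
        calc c ^ N < f.symm (f c ^ N) * e := h3
        _ ≤ f.symm (f c ^ N) * f.symm (f c ^ N) :=
            mul_le_mul_of_nonneg_left he1 (h0₁ _)
        _ < a * a := mul_lt_mul' (le_of_lt hWa) hWa (h0₁ _) (nonstd_pos ha)
      have hge : a * a ≤ c ^ N := by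
        calc a * a ≤ c ^ (k + 1) * c ^ (k + 1) :=
          mul_le_mul hle hle (h0₁ a) (pow_nonneg (h0₁ c) _)
        _ = c ^ N := (pow_add c _ _).symm
      exact absurd hlt (not_lt.mpr hge)
    · obtain ⟨k0, hk0⟩ := std_cast h0₁ hd₁ hcc
      rw [hk0, ← Nat.cast_pow]
      exact ha _

end Main2
theorem e3_symm {M : Type*} [CommSemiring M] [LinearOrder M] [IsStrictOrderedRing M] {a b : M} (h : E3 a b) : E3 b a := by
  obtain ⟨c, h1, h2, h3⟩ := h
  exact ⟨c, fun n => ⟨(h1 n).2, (h1 n).1⟩, h3, h2⟩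

section Main3
variable {M₁ M₂ : Type*} [CommSemiring M₁] [LinearOrder M₁] [IsStrictOrderedRing M₁] [CommSemiring M₂] [LinearOrder M₂] [IsStrictOrderedRing M₂]
variable (h0₁ : ∀ x : M₁, 0 ≤ x) (h0₂ : ∀ x : M₂, 0 ≤ x)
variable (hd₁ : ∀ a x : M₁, ¬(a < x ∧ x < a + 1)) (hd₂ : ∀ a x : M₂, ¬(a < x ∧ x < a + 1))
variable (hdiv₁ : ∀ a b : M₁, b ≠ 0 → ∃ q r : M₁, a = b * q + r ∧ r < b)
variable (hdiv₂ : ∀ a b : M₂, b ≠ 0 → ∃ q r : M₂, a = b * q + r ∧ r < b)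
variable (hrig : OrderRigid3 M₁) (f : M₁ ≃o M₂)

include h0₁ h0₂ hd₁ hd₂ hdiv₁ hdiv₂ hrig

theorem e3_fwd_le (a b : M₁) (ha : Nonstd a) (hb : Nonstd b) (hab : a ≤ b) (h : E3 a b) :
    E3 (f a) (f b) := by
  obtain ⟨c, hcp, hab1, hba1⟩ := h
  have ha0 : (0 : M₁) < a := nonstd_pos ha
  have hc1 : (1 : M₁) < c := by
    by_contra hcle
    push_neg at hcle
    have h1 : a * c ≤ a := by
      have := mul_le_mul_of_nonneg_left hcle (h0₁ a)
      rwa [mul_one] at this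
    exact absurd hba1 (not_lt.mpr (le_trans h1 hab))
  have hac : a < a * c := by
    have := mul_lt_mul_of_pos_left hc1 ha0
    rwa [mul_one] at this
  have hA : Nonstd (f a) := nonstd_map h0₁ hd₁ h0₂ hd₂ f ha
  have hB : Nonstd (f b) := nonstd_map h0₁ hd₁ h0₂ hd₂ f hb
  have hA0 : f a ≠ 0 := ne_of_gt (nonstd_pos hA)
  obtain ⟨Q, R, hFeq, hR⟩ := hdiv₂ (f (a * c)) (f a) hA0
  have hAF : f a < f (a * c) := f.lt_iff_lt.mpr hac
  have hQ1 : (1 : M₂) ≤ Q := by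
    rcases eq_or_lt_of_le (h0₂ Q) with h | h
    · exfalso
      rw [← h, mul_zero, zero_add] at hFeq
      rw [hFeq] at hAF
      exact absurd hR (not_lt.mpr (le_of_lt hAF))
    · exact my_one_le hd₂ h
  have hAQ : f a * Q ≤ f (a * c) := hFeq ▸ le_add_of_nonneg_right (h0₂ R)
  have hq₁pos : (0 : M₁) < f.symm Q := by
    have h1 : (0 : M₂) < Q := lt_of_lt_of_le zero_lt_one hQ1
    have h2 := f.symm.lt_iff_lt.mpr h1
    rwa [iso_map_zero h0₂ h0₁ f.symm] at h2
  have hE3 := rig_mul h0₁ h0₂ hd₁ hd₂ hdiv₁ hdiv₂ hrig f a (f.symm Q) ha hq₁pos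
  rw [f.apply_symm_apply] at hE3
  obtain ⟨e, hep, h3, -⟩ := hE3
  have hw₁ : f.symm (f a * Q) ≤ a * c := by
    have := f.symm.le_iff_le.mpr hAQ
    rwa [f.symm_apply_apply] at this
  have hca : c < a := by
    have := (hcp 1).1; rwa [pow_one] at this
  have hSm_e : Sm e a := by
    apply sm_trick h0₁
    intro k
    calc e ^ k < f.symm (f a * Q) := (hep k).2
    _ ≤ a * c := hw₁
    _ < a * a := mul_lt_mul_of_pos_left hca ha0
  have hSm_c : Sm c a := fun n => (hcp n).1
  have hq₁lt : f.symm Q < c * e := by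
    refine lt_of_mul_lt_mul_left (a := a) ?_ (h0₁ a)
    calc a * f.symm Q < f.symm (f a * Q) * e := h3
    _ ≤ (a * c) * e := mul_le_mul_of_nonneg_right hw₁ (h0₁ e)
    _ = a * (c * e) := mul_assoc a c e
  have hSm_q : Sm (f.symm Q) a := sm_mono h0₁ (le_of_lt hq₁lt) (sm_mul h0₁ hSm_c hSm_e)
  have hSm_Q : Sm Q (f a) := by
    have := sm_map h0₁ h0₂ hd₁ hd₂ hdiv₁ hdiv₂ hrig f a (f.symm Q) ha hSm_q
    rwa [f.apply_symm_apply] at this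
  have hSm_P : Sm (Q + 1) (f a) := sm_succ h0₂ hA hSm_Q hQ1
  have hfab : f a ≤ f b := f.le_iff_le.mpr hab
  refine ⟨Q + 1, fun n => ⟨hSm_P n, lt_of_lt_of_le (hSm_P n) hfab⟩, ?_, ?_⟩
  · have h2Q : (2 : M₂) ≤ Q + 1 := by
      have := add_le_add_left hQ1 1
      rwa [one_add_one_eq_two] at this
    calc f a ≤ f b := hfab
    _ = f b * 1 := (mul_one _).symm
    _ < f b * 2 := mul_lt_mul_of_pos_left one_lt_two (nonstd_pos hB)
    _ ≤ f b * (Q + 1) := mul_le_mul_of_nonneg_left h2Q (h0₂ (f b))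
  · calc f b < f (a * c) := f.lt_iff_lt.mpr hba1
    _ = f a * Q + R := hFeq
    _ < f a * Q + f a := add_lt_add_right hR _
    _ = f a * (Q + 1) := by ring

theorem e3_rev_le (a b : M₁) (ha : Nonstd a) (hb : Nonstd b) (hab : a ≤ b)
    (h : E3 (f a) (f b)) : E3 a b := by
  obtain ⟨C, hCp, h1, h2⟩ := h
  have ha0 : (0 : M₁) < a := nonstd_pos ha
  have hA : Nonstd (f a) := nonstd_map h0₁ hd₁ h0₂ hd₂ f ha
  have hfab : f a ≤ f b := f.le_iff_le.mpr hab
  have hC1 : (1 : M₂) < C := by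
    by_contra hcle
    push_neg at hcle
    have h3 : f a * C ≤ f a := by
      have := mul_le_mul_of_nonneg_left hcle (h0₂ (f a))
      rwa [mul_one] at this
    exact absurd h2 (not_lt.mpr (le_trans h3 hfab))
  have hAC : f a < f a * C := by
    have := mul_lt_mul_of_pos_left hC1 (nonstd_pos hA)
    rwa [mul_one] at this
  have hbG : b < f.symm (f a * C) := by
    have := f.symm.lt_iff_lt.mpr h2
    rwa [f.symm_apply_apply] at this
  have haG : a < f.symm (f a * C) := lt_of_le_of_lt hab hbG
  obtain ⟨q, r, hGeq, hr⟩ := hdiv₁ (f.symm (f a * C)) a (ne_of_gt ha0)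
  have hq1 : (1 : M₁) ≤ q := by
    rcases eq_or_lt_of_le (h0₁ q) with h | h
    · exfalso
      rw [← h, mul_zero, zero_add] at hGeq
      rw [hGeq] at haG
      exact absurd hr (not_lt.mpr (le_of_lt haG))
    · exact my_one_le hd₁ h
  have hc'pos : (0 : M₁) < f.symm C := by
    have h3 : (0 : M₂) < C := lt_of_lt_of_le zero_lt_one (le_of_lt hC1)
    have h4 := f.symm.lt_iff_lt.mpr h3
    rwa [iso_map_zero h0₂ h0₁ f.symm] at h4
  have hSm_c' : Sm (f.symm C) a := by
    apply sm_pull h0₁ h0₂ hd₁ hd₂ hdiv₁ hdiv₂ hrig f a (f.symm C) ha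
    rw [f.apply_symm_apply]
    exact fun n => (hCp n).1
  have hE3 := rig_mul h0₁ h0₂ hd₁ hd₂ hdiv₁ hdiv₂ hrig f a (f.symm C) ha hc'pos
  rw [f.apply_symm_apply] at hE3
  obtain ⟨e, hep, -, h4⟩ := hE3
  have hc'a : f.symm C < a := by
    have := hSm_c' 1; rwa [pow_one] at this
  have hSm_e : Sm e a := by
    apply sm_trick h0₁
    intro k
    calc e ^ k < a * f.symm C := (hep k).1
    _ < a * a := mul_lt_mul_of_pos_left hc'a ha0
  have haq : a * q ≤ f.symm (f a * C) := hGeq ▸ le_add_of_nonneg_right (h0₁ r)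
  have hqlt : q < f.symm C * e := by
    refine lt_of_mul_lt_mul_left (a := a) ?_ (h0₁ a)
    calc a * q ≤ f.symm (f a * C) := haq
    _ < (a * f.symm C) * e := h4
    _ = a * (f.symm C * e) := mul_assoc _ _ _
  have hSm_q : Sm q a := sm_mono h0₁ (le_of_lt hqlt) (sm_mul h0₁ hSm_c' hSm_e)
  have hSm_p : Sm (q + 1) a := sm_succ h0₁ ha hSm_q hq1
  refine ⟨q + 1, fun n => ⟨hSm_p n, lt_of_lt_of_le (hSm_p n) hab⟩, ?_, ?_⟩
  · have h2q : (2 : M₁) ≤ q + 1 := by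
      have := add_le_add_left hq1 1
      rwa [one_add_one_eq_two] at this
    calc a ≤ b := hab
    _ = b * 1 := (mul_one _).symm
    _ < b * 2 := mul_lt_mul_of_pos_left one_lt_two (nonstd_pos hb)
    _ ≤ b * (q + 1) := mul_le_mul_of_nonneg_left h2q (h0₁ b)
  · calc b < f.symm (f a * C) := hbG
    _ = a * q + r := hGeq
    _ < a * q + a := add_lt_add_right hr _
    _ = a * (q + 1) := by ring

theorem e4_fwd (a b : M₁) (ha : Nonstd a) (hb : Nonstd b) (h : E4 a b) : E4 (f a) (f b) := by
  obtain ⟨n, h1, h2⟩ := h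
  have hA : Nonstd (f a) := nonstd_map h0₁ hd₁ h0₂ hd₂ f ha
  have hB : Nonstd (f b) := nonstd_map h0₁ hd₁ h0₂ hd₂ f hb
  have k1 : ∃ K, f a < f b ^ K := by
    by_contra hK
    push_neg at hK
    have hSm : Sm (f b) (f a) := by
      intro K
      exact lt_of_lt_of_le (pow_lt_pow_right₀ (nonstd_one_lt hB) (Nat.lt_succ_self K))
        (hK (K + 1))
    have := sm_pull h0₁ h0₂ hd₁ hd₂ hdiv₁ hdiv₂ hrig f a b ha hSm
    exact absurd h1 (not_lt.mpr (le_of_lt (this n)))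
  have k2 : ∃ K, f b < f a ^ K := by
    by_contra hK
    push_neg at hK
    have hSm : Sm (f a) (f b) := by
      intro K
      exact lt_of_lt_of_le (pow_lt_pow_right₀ (nonstd_one_lt hA) (Nat.lt_succ_self K))
        (hK (K + 1))
    have := sm_pull h0₁ h0₂ hd₁ hd₂ hdiv₁ hdiv₂ hrig f b a hb hSm
    exact absurd h2 (not_lt.mpr (le_of_lt (this n)))
  obtain ⟨K1, hK1⟩ := k1
  obtain ⟨K2, hK2⟩ := k2
  refine ⟨max K1 K2, ?_, ?_⟩
  · exact lt_of_lt_of_le hK1 (pow_le_pow_right₀ (le_of_lt (nonstd_one_lt hB)) (le_max_left _ _))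
  · exact lt_of_lt_of_le hK2 (pow_le_pow_right₀ (le_of_lt (nonstd_one_lt hA)) (le_max_right _ _))

theorem e4_rev (a b : M₁) (ha : Nonstd a) (hb : Nonstd b) (h : E4 (f a) (f b)) : E4 a b := by
  obtain ⟨n, h1, h2⟩ := h
  have k1 : ∃ K, a < b ^ K := by
    by_contra hK
    push_neg at hK
    have hSm : Sm b a := by
      intro K
      exact lt_of_lt_of_le (pow_lt_pow_right₀ (nonstd_one_lt hb) (Nat.lt_succ_self K))
        (hK (K + 1))
    have := sm_map h0₁ h0₂ hd₁ hd₂ hdiv₁ hdiv₂ hrig f a b ha hSm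
    exact absurd h1 (not_lt.mpr (le_of_lt (this n)))
  have k2 : ∃ K, b < a ^ K := by
    by_contra hK
    push_neg at hK
    have hSm : Sm a b := by
      intro K
      exact lt_of_lt_of_le (pow_lt_pow_right₀ (nonstd_one_lt ha) (Nat.lt_succ_self K))
        (hK (K + 1))
    have := sm_map h0₁ h0₂ hd₁ hd₂ hdiv₁ hdiv₂ hrig f b a hb hSm
    exact absurd h2 (not_lt.mpr (le_of_lt (this n)))
  obtain ⟨K1, hK1⟩ := k1
  obtain ⟨K2, hK2⟩ := k2
  refine ⟨max K1 K2, ?_, ?_⟩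
  · exact lt_of_lt_of_le hK1 (pow_le_pow_right₀ (le_of_lt (nonstd_one_lt hb)) (le_max_left _ _))
  · exact lt_of_lt_of_le hK2 (pow_le_pow_right₀ (le_of_lt (nonstd_one_lt ha)) (le_max_right _ _))

end Main3

/-- if `M₁` is 3-order-rigid, an order isomorphism `f : M₁ ≃o M₂`
maps `E³` onto `E³` and `E⁴` onto `E⁴`. -/
theorem threeOR_orderIso_maps_E3_E4 {M₁ M₂ : Type*}
    [CommSemiring M₁] [LinearOrder M₁] [IsStrictOrderedRing M₁] [CommSemiring M₂] [LinearOrder M₂] [IsStrictOrderedRing M₂]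
    (h0₁ : ∀ x : M₁, 0 ≤ x) (h0₂ : ∀ x : M₂, 0 ≤ x)
    (hd₁ : ∀ a x : M₁, ¬(a < x ∧ x < a + 1)) (hd₂ : ∀ a x : M₂, ¬(a < x ∧ x < a + 1))
    (hsub₁ : ∀ a b : M₁, a ≤ b → ∃ c, b = a + c)
    (hsub₂ : ∀ a b : M₂, a ≤ b → ∃ c, b = a + c)
    (hdiv₁ : ∀ a b : M₁, b ≠ 0 → ∃ q r : M₁, a = b * q + r ∧ r < b)
    (hdiv₂ : ∀ a b : M₂, b ≠ 0 → ∃ q r : M₂, a = b * q + r ∧ r < b)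
    (hrig : OrderRigid3 M₁)
    (f : M₁ ≃o M₂) (a b : M₁) (ha : Nonstd a) (hb : Nonstd b) :
    (E3 a b ↔ E3 (f a) (f b)) ∧ (E4 a b ↔ E4 (f a) (f b)) := by
  constructor
  · constructor
    · intro h
      rcases le_total a b with hab | hba
      · exact e3_fwd_le h0₁ h0₂ hd₁ hd₂ hdiv₁ hdiv₂ hrig f a b ha hb hab h
      · exact e3_symm
          (e3_fwd_le h0₁ h0₂ hd₁ hd₂ hdiv₁ hdiv₂ hrig f b a hb ha hba (e3_symm h))
    · intro h
      rcases le_total a b with hab | hba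
      · exact e3_rev_le h0₁ h0₂ hd₁ hd₂ hdiv₁ hdiv₂ hrig f a b ha hb hab h
      · exact e3_symm
          (e3_rev_le h0₁ h0₂ hd₁ hd₂ hdiv₁ hdiv₂ hrig f b a hb ha hba (e3_symm h))
  · constructor
    · exact e4_fwd h0₁ h0₂ hd₁ hd₂ hdiv₁ hdiv₂ hrig f a b ha hb
    · exact e4_rev h0₁ h0₂ hd₁ hd₂ hdiv₁ hdiv₂ hrig f a b ha hb
end

section
/- Assume M₁ is 4-order-rigid and h : M₁ ≃o M₂ is an order isomorphism. Then for all nonstandard a, b ∈ M₁: if h a E⁴ h b in M₂, then a E⁴ b in M₁. -/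
section Aux

variable {M : Type*} [CommSemiring M] [LinearOrder M] [IsStrictOrderedRing M]

lemma succ_le_of_lt'' (hd : ∀ a x : M, ¬(a < x ∧ x < a + 1)) {x y : M} (hxy : x < y) :
    x + 1 ≤ y := by
  by_contra hc
  exact hd x y ⟨hxy, lt_of_not_ge hc⟩

lemma lex_lt_of (h0 : ∀ x : M, 0 ≤ x) (hd : ∀ a x : M, ¬(a < x ∧ x < a + 1))
    {c q r q' r' : M} (hr : r < c)
    (hlex : q < q' ∨ (q = q' ∧ r < r')) : c * q + r < c * q' + r' := by
  rcases hlex with hq | ⟨rfl, hr2⟩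
  · have h1 : q + 1 ≤ q' := succ_le_of_lt'' hd hq
    calc c * q + r < c * q + c := add_lt_add_right hr _
      _ = c * (q + 1) := by ring
      _ ≤ c * q' := mul_le_mul_of_nonneg_left h1 (h0 c)
      _ ≤ c * q' + r' := le_add_of_nonneg_right (h0 r')
  · exact add_lt_add_right hr2 _

lemma div_uniq (h0 : ∀ x : M, 0 ≤ x) (hd : ∀ a x : M, ¬(a < x ∧ x < a + 1))
    {c q r q' r' : M} (hr : r < c) (hr' : r' < c)
    (heq : c * q + r = c * q' + r') : q = q' ∧ r = r' := by
  rcases lt_trichotomy q q' with hlt | hlt | hlt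
  · exact absurd heq (ne_of_lt (lex_lt_of h0 hd hr (Or.inl hlt)))
  · subst hlt
    exact ⟨rfl, add_left_cancel heq⟩
  · exact absurd heq.symm (ne_of_lt (lex_lt_of h0 hd hr' (Or.inl hlt)))

lemma lex_lt_iff (h0 : ∀ x : M, 0 ≤ x) (hd : ∀ a x : M, ¬(a < x ∧ x < a + 1))
    {c q r q' r' : M} (hr : r < c) (hr' : r' < c) :
    c * q + r < c * q' + r' ↔ (q < q' ∨ (q = q' ∧ r < r')) := by
  constructor
  · intro hlt
    rcases lt_trichotomy q q' with h1 | h1 | h1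
    · exact Or.inl h1
    · subst h1; exact Or.inr ⟨rfl, lt_of_add_lt_add_left hlt⟩
    · exact absurd (lex_lt_of h0 hd hr' (Or.inl h1)) (not_lt.2 hlt.le)
  · exact lex_lt_of h0 hd hr

end Aux

section Two

variable {M₁ M₂ : Type*} [CommSemiring M₁] [LinearOrder M₁] [IsStrictOrderedRing M₁] [CommSemiring M₂] [LinearOrder M₂] [IsStrictOrderedRing M₂]

lemma orderIso_map_zero' (h0₁ : ∀ x : M₁, 0 ≤ x) (h0₂ : ∀ x : M₂, 0 ≤ x)
    (h : M₁ ≃o M₂) : h 0 = 0 := by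
  refine le_antisymm ?_ (h0₂ _)
  have := h.le_iff_le.mpr (h0₁ (h.symm 0))
  simpa using this

lemma orderIso_map_one' (h0₁ : ∀ x : M₁, 0 ≤ x) (h0₂ : ∀ x : M₂, 0 ≤ x)
    (hd₁ : ∀ a x : M₁, ¬(a < x ∧ x < a + 1)) (hd₂ : ∀ a x : M₂, ¬(a < x ∧ x < a + 1))
    (h : M₁ ≃o M₂) : h 1 = 1 := by
  have hz : h 0 = 0 := orderIso_map_zero' h0₁ h0₂ h
  have h01 : (0 : M₂) < h 1 := by
    have := h.lt_iff_lt.mpr (zero_lt_one (α := M₁))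
    rwa [hz] at this
  rcases lt_trichotomy (h 1) 1 with hlt | heq | hgt
  · exact absurd ⟨h01, by simpa using hlt⟩ (hd₂ 0 (h 1))
  · exact heq
  · exfalso
    have e1 : h.symm 1 < 1 := by
      have := h.symm.lt_iff_lt.mpr hgt
      rwa [h.symm_apply_apply] at this
    have hz' : h.symm 0 = 0 := orderIso_map_zero' h0₂ h0₁ h.symm
    have e0 : (0 : M₁) < h.symm 1 := by
      have := h.symm.lt_iff_lt.mpr (zero_lt_one (α := M₂))
      rwa [hz'] at this
    exact hd₁ 0 (h.symm 1) ⟨e0, by simpa using e1⟩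

lemma seg_iso_of_orderIso (h : M₁ ≃o M₂) (b : M₁) :
    Nonempty ({x : M₁ // x < b} ≃o {y : M₂ // y < h b}) := by
  refine ⟨StrictMono.orderIsoOfSurjective
    (fun x => ⟨h x.1, h.lt_iff_lt.mpr x.2⟩) ?_ ?_⟩
  · intro x x' hlt
    exact Subtype.mk_lt_mk.mpr (h.lt_iff_lt.mpr hlt)
  · intro y
    refine ⟨⟨h.symm y.1, ?_⟩, Subtype.ext (h.apply_symm_apply y.1)⟩
    have := h.symm.lt_iff_lt.mpr y.2
    rwa [h.symm_apply_apply] at this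

lemma seg_one_iso (h0₁ : ∀ x : M₁, 0 ≤ x) (h0₂ : ∀ x : M₂, 0 ≤ x)
    (hd₁ : ∀ a x : M₁, ¬(a < x ∧ x < a + 1)) (hd₂ : ∀ a x : M₂, ¬(a < x ∧ x < a + 1)) :
    Nonempty ({x : M₁ // x < 1} ≃o {y : M₂ // y < 1}) := by
  have e₁ : ∀ x : M₁, x < 1 → x = 0 := by
    intro x hx
    refine le_antisymm ?_ (h0₁ x)
    by_contra hc
    exact hd₁ 0 x ⟨lt_of_not_ge hc, by simpa using hx⟩
  have e₂ : ∀ y : M₂, y < 1 → y = 0 := by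
    intro y hy
    refine le_antisymm ?_ (h0₂ y)
    by_contra hc
    exact hd₂ 0 y ⟨lt_of_not_ge hc, by simpa using hy⟩
  refine ⟨StrictMono.orderIsoOfSurjective (fun _ => ⟨0, zero_lt_one⟩) ?_ ?_⟩
  · intro x x' hlt
    exact absurd (Subtype.ext ((e₁ x.1 x.2).trans (e₁ x'.1 x'.2).symm)) (ne_of_lt hlt)
  · intro y
    exact ⟨⟨0, zero_lt_one⟩, Subtype.ext (e₂ y.1 y.2).symm⟩

lemma seg_mul_iso (h0₁ : ∀ x : M₁, 0 ≤ x) (h0₂ : ∀ x : M₂, 0 ≤ x)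
    (hd₁ : ∀ a x : M₁, ¬(a < x ∧ x < a + 1)) (hd₂ : ∀ a x : M₂, ¬(a < x ∧ x < a + 1))
    (hdiv₁ : ∀ a b : M₁, b ≠ 0 → ∃ q r : M₁, a = b * q + r ∧ r < b)
    (hdiv₂ : ∀ a b : M₂, b ≠ 0 → ∃ q r : M₂, a = b * q + r ∧ r < b)
    {c c' : M₁} {d d' : M₂} (hc : 0 < c) (hd0 : 0 < d)
    (f : {x : M₁ // x < c} ≃o {y : M₂ // y < d})
    (g : {x : M₁ // x < c'} ≃o {y : M₂ // y < d'}) :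
    Nonempty ({x : M₁ // x < c * c'} ≃o {y : M₂ // y < d * d'}) := by
  choose Q R hQR hR using fun x : M₁ => hdiv₁ x c hc.ne'
  have hQlt : ∀ x : M₁, x < c * c' → Q x < c' := by
    intro x hx
    by_contra hcon
    have h1 : c * c' ≤ c * Q x := mul_le_mul_of_nonneg_left (le_of_not_gt hcon) (h0₁ c)
    have h2 : c * c' ≤ x := by
      refine le_trans h1 ?_
      conv_rhs => rw [hQR x]
      exact le_add_of_nonneg_right (h0₁ _)
    exact absurd hx (not_lt.2 h2)
  have bound : ∀ (s : {y : M₂ // y < d'}) (t : {y : M₂ // y < d}),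
      d * s.1 + t.1 < d * d' := by
    intro s t
    have := lex_lt_of h0₂ hd₂ (q := s.1) (q' := d') (r := t.1) (r' := 0) t.2 (Or.inl s.2)
    simpa using this
  set F : {x : M₁ // x < c * c'} → {y : M₂ // y < d * d'} := fun x =>
    ⟨d * (g ⟨Q x.1, hQlt x.1 x.2⟩).1 + (f ⟨R x.1, hR x.1⟩).1,
      bound (g ⟨Q x.1, hQlt x.1 x.2⟩) (f ⟨R x.1, hR x.1⟩)⟩ with hF
  have hmono : StrictMono F := by
    intro x x' hlt
    have hxx : x.1 < x'.1 := hlt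
    rw [hQR x.1, hQR x'.1] at hxx
    have hlex := (lex_lt_iff h0₁ hd₁ (hR x.1) (hR x'.1)).mp hxx
    show F x < F x'
    rw [hF]
    refine Subtype.mk_lt_mk.mpr ?_
    refine lex_lt_of h0₂ hd₂ (f ⟨R x.1, hR x.1⟩).2 ?_
    rcases hlex with h1 | ⟨h1, h2⟩
    · exact Or.inl (g.lt_iff_lt.mpr (Subtype.mk_lt_mk.mpr h1))
    · refine Or.inr ⟨?_, f.lt_iff_lt.mpr (Subtype.mk_lt_mk.mpr h2)⟩
      have e : (⟨Q x.1, hQlt x.1 x.2⟩ : {x : M₁ // x < c'}) =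
          ⟨Q x'.1, hQlt x'.1 x'.2⟩ := Subtype.ext h1
      rw [e]
  have hsurj : Function.Surjective F := by
    intro y
    obtain ⟨s, t, hst, ht⟩ := hdiv₂ y.1 d hd0.ne'
    have hslt : s < d' := by
      by_contra hcon
      have h1 : d * d' ≤ d * s := mul_le_mul_of_nonneg_left (le_of_not_gt hcon) (h0₂ d)
      have h2 : d * d' ≤ y.1 := by
        refine le_trans h1 ?_
        rw [hst]
        exact le_add_of_nonneg_right (h0₂ _)
      exact absurd y.2 (not_lt.2 h2)
    set qs : {x : M₁ // x < c'} := g.symm ⟨s, hslt⟩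
    set rt : {x : M₁ // x < c} := f.symm ⟨t, ht⟩
    have hx : c * qs.1 + rt.1 < c * c' := by
      have := lex_lt_of h0₁ hd₁ (q := qs.1) (q' := c') (r := rt.1) (r' := 0) rt.2 (Or.inl qs.2)
      simpa using this
    refine ⟨⟨c * qs.1 + rt.1, hx⟩, ?_⟩
    set z : M₁ := c * qs.1 + rt.1
    have hrep : c * Q z + R z = c * qs.1 + rt.1 := (hQR z).symm
    obtain ⟨hq, hr2⟩ := div_uniq h0₁ hd₁ (hR z) rt.2 hrep
    apply Subtype.ext
    show d * (g ⟨Q z, _⟩).1 + (f ⟨R z, _⟩).1 = y.1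
    have e1 : (⟨Q z, hQlt z hx⟩ : {x : M₁ // x < c'}) = qs := Subtype.ext hq
    have e2 : (⟨R z, hR z⟩ : {x : M₁ // x < c}) = rt := Subtype.ext hr2
    rw [e1, e2]
    have e3 : g qs = ⟨s, hslt⟩ := g.apply_symm_apply _
    have e4 : f rt = ⟨t, ht⟩ := f.apply_symm_apply _
    rw [e3, e4, ← hst]
  exact ⟨StrictMono.orderIsoOfSurjective F hmono hsurj⟩

lemma seg_pow_iso (h0₁ : ∀ x : M₁, 0 ≤ x) (h0₂ : ∀ x : M₂, 0 ≤ x)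
    (hd₁ : ∀ a x : M₁, ¬(a < x ∧ x < a + 1)) (hd₂ : ∀ a x : M₂, ¬(a < x ∧ x < a + 1))
    (hdiv₁ : ∀ a b : M₁, b ≠ 0 → ∃ q r : M₁, a = b * q + r ∧ r < b)
    (hdiv₂ : ∀ a b : M₂, b ≠ 0 → ∃ q r : M₂, a = b * q + r ∧ r < b)
    (h : M₁ ≃o M₂) {b : M₁} (hb : 0 < b) (n : ℕ) :
    Nonempty ({x : M₁ // x < b ^ n} ≃o {y : M₂ // y < (h b) ^ n}) := by
  induction n with
  | zero =>
    rw [pow_zero, pow_zero]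
    exact seg_one_iso h0₁ h0₂ hd₁ hd₂
  | succ n ih =>
    obtain ⟨g⟩ := ih
    obtain ⟨f⟩ := seg_iso_of_orderIso h b
    have hd0 : (0 : M₂) < h b := by
      have := h.lt_iff_lt.mpr hb
      rwa [orderIso_map_zero' h0₁ h0₂ h] at this
    rw [pow_succ', pow_succ']
    exact seg_mul_iso h0₁ h0₂ hd₁ hd₂ hdiv₁ hdiv₂ hb hd0 f g

end Two

/-- if `M₁` is 4-order-rigid and `h : M₁ ≃o M₂` is an order isomorphism,
then `h a E⁴ h b` (in `M₂`) implies `a E⁴ b` (in `M₁`). -/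
theorem fourOR_orderIso_reflects_E4 {M₁ M₂ : Type*}
    [CommSemiring M₁] [LinearOrder M₁] [IsStrictOrderedRing M₁] [CommSemiring M₂] [LinearOrder M₂] [IsStrictOrderedRing M₂]
    (h0₁ : ∀ x : M₁, 0 ≤ x) (h0₂ : ∀ x : M₂, 0 ≤ x)
    (hd₁ : ∀ a x : M₁, ¬(a < x ∧ x < a + 1)) (hd₂ : ∀ a x : M₂, ¬(a < x ∧ x < a + 1))
    (hsub₁ : ∀ a b : M₁, a ≤ b → ∃ c, b = a + c)
    (hsub₂ : ∀ a b : M₂, a ≤ b → ∃ c, b = a + c)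
    (hdiv₁ : ∀ a b : M₁, b ≠ 0 → ∃ q r : M₁, a = b * q + r ∧ r < b)
    (hdiv₂ : ∀ a b : M₂, b ≠ 0 → ∃ q r : M₂, a = b * q + r ∧ r < b)
    (hrig : OrderRigid4 M₁)
    (h : M₁ ≃o M₂) (a b : M₁) (ha : Nonstd a) (hb : Nonstd b)
    (hE : E4 (h a) (h b)) :
    E4 a b := by
  obtain ⟨n, hn1, hn2⟩ := hE
  have hb0 : (0 : M₁) < b := by simpa using hb 0
  have ha0 : (0 : M₁) < a := by simpa using ha 0
  have h1b : (1 : M₁) ≤ b := le_of_lt (by simpa using hb 1)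
  have h1a : (1 : M₁) ≤ a := le_of_lt (by simpa using ha 1)
  have hone : h (1 : M₁) = 1 := orderIso_map_one' h0₁ h0₂ hd₁ hd₂ h
  have hn : 1 ≤ n := by
    rcases Nat.eq_zero_or_pos n with rfl | hpos
    · exfalso
      rw [pow_zero, ← hone] at hn1
      have : a < 1 := h.lt_iff_lt.mp hn1
      exact absurd this (not_lt.2 (le_of_lt (by simpa using ha 1)))
    · exact hpos
  -- First direction: a < b ^ N for some N
  have key : ∀ u v : M₁, Nonstd u → Nonstd v → (1 : M₁) ≤ v → 0 < v →
      h u < (h v) ^ n → ∃ N : ℕ, u < v ^ N := by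
    intro u v hu hv h1v hv0 hlt
    set c : M₁ := h.symm ((h v) ^ n) with hc
    have huc : u < c := by
      have := h.symm.lt_iff_lt.mpr hlt
      rwa [h.symm_apply_apply] at this
    have hcns : Nonstd c := fun k => lt_trans (hu k) huc
    have hvnns : Nonstd (v ^ n) := by
      intro k
      refine lt_of_lt_of_le (hv k) ?_
      calc v = v ^ 1 := (pow_one v).symm
        _ ≤ v ^ n := pow_le_pow_right₀ h1v hn
    have isoC : Nonempty ({x : M₁ // x < c} ≃o {x : M₁ // x < v ^ n}) := by
      obtain ⟨e1⟩ := seg_pow_iso h0₁ h0₂ hd₁ hd₂ hdiv₁ hdiv₂ h hv0 n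
      obtain ⟨e2⟩ := seg_iso_of_orderIso h c
      rw [hc, h.apply_symm_apply] at e2
      exact ⟨e2.trans e1.symm⟩
    obtain ⟨m, hm1, -⟩ := hrig c (v ^ n) hcns hvnns isoC
    rw [← pow_mul] at hm1
    exact ⟨n * m, lt_trans huc hm1⟩
  obtain ⟨N₁, hN₁⟩ := key a b ha hb h1b hb0 hn1
  obtain ⟨N₂, hN₂⟩ := key b a hb ha h1a ha0 hn2
  refine ⟨max N₁ N₂, ?_, ?_⟩
  · exact lt_of_lt_of_le hN₁ (pow_le_pow_right₀ h1b (le_max_left _ _))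
  · exact lt_of_lt_of_le hN₂ (pow_le_pow_right₀ h1a (le_max_right _ _))
end
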